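/- arXiv:1410.4265 — 4 statements merged into one kernel-verified Lean document; each statement's English description precedes it below -/
import Mathlib

section
/- (Bi-Free Kac/Loeve Theorem, forward direction.) Let (A, φ) be a non-commutative probability space and let (T_1, S_1) and (T_2, S_2) be two-faced pairs in A that are bi-free and satisfy φ(T_k) = 0 = φ(S_k) for k ∈ {1,2}. Fix θ ∈ (0, π/2) and set T_3 = cos(θ)T_1 + sin(θ)T_2, S_3 = cos(θ)S_1 + sin(θ)S_2, T_4 = −sin(θ)T_1 + cos(θ)T_2, S_4 = −sin(θ)S_1 + cos(θ)S_2. If (T_3, S_3) and (T_4, S_4) are bi-free, then (T_1, S_1) and (T_2, S_2) are bi-free central limit distributions and have equal second order (ℓ,r)-cumulants. -/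
open Finset

namespace BiFreeNL

open scoped Classical

/-- `i` and `j` lie in a common block of `P`. -/
def SameBlock {n : ℕ} (P : Finset (Finset (Fin n))) (i j : Fin n) : Prop :=
  ∃ V ∈ P, i ∈ V ∧ j ∈ V

/-- `P` is a partition of `{1, …, n}` (blocks are nonempty, and every point lies in a
unique block). -/
def IsPartition {n : ℕ} (P : Finset (Finset (Fin n))) : Prop :=
  (∀ V ∈ P, V.Nonempty) ∧ ∀ i : Fin n, ∃! V : Finset (Fin n), V ∈ P ∧ i ∈ V

/-- `P` refines `Q` : every block of `P` is contained in a block of `Q`. -/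
def Refines {n : ℕ} (P Q : Finset (Finset (Fin n))) : Prop :=
  ∀ V ∈ P, ∃ W ∈ Q, V ⊆ W

/-- The rank of `i` in the total order `≺_χ`, which reads the left indices
(`χ = true`) in increasing order followed by the right indices (`χ = false`) in
decreasing order.  This is `s_χ⁻¹`. -/
def chiRank {n : ℕ} (χ : Fin n → Bool) (i : Fin n) : ℕ :=
  if χ i = true then ((univ : Finset (Fin n)).filter fun j => χ j = true ∧ j < i).card
  else ((univ : Finset (Fin n)).filter fun j => χ j = true).card
    + ((univ : Finset (Fin n)).filter fun j => χ j = false ∧ i < j).card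

/-- `P` is a bi-non-crossing partition with respect to `χ`, i.e. `s_χ⁻¹ · P` is
non-crossing; equivalently no two distinct blocks cross with respect to `≺_χ`. -/
def IsBiNonCrossing {n : ℕ} (χ : Fin n → Bool) (P : Finset (Finset (Fin n))) : Prop :=
  IsPartition P ∧
    ∀ u₁ v₁ u₂ v₂ : Fin n,
      chiRank χ u₁ < chiRank χ v₁ → chiRank χ v₁ < chiRank χ u₂ →
        chiRank χ u₂ < chiRank χ v₂ →
        SameBlock P u₁ u₂ → SameBlock P v₁ v₂ → SameBlock P u₁ v₁

/-- The (finite) set `BNC(χ)` of bi-non-crossing partitions with respect to `χ`. -/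
noncomputable def BNC {n : ℕ} (χ : Fin n → Bool) : Finset (Finset (Finset (Fin n))) :=
  Finset.univ.filter fun P => IsBiNonCrossing χ P

/-- The maximal element `1_χ` of `BNC(χ)` : the partition with a single block. -/
def onePart (n : ℕ) : Finset (Finset (Fin n)) := {(Finset.univ : Finset (Fin n))}

/-- `μ` is the Möbius function of the lattice `BNC(χ)` : it vanishes off the
refinement order, and satisfies the two defining convolution identities. -/
def IsMoebius {n : ℕ} (χ : Fin n → Bool)
    (μ : Finset (Finset (Fin n)) → Finset (Finset (Fin n)) → ℂ) : Prop :=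
  (∀ P Q, ¬ Refines P Q → μ P Q = 0) ∧
  (∀ P Q, P ∈ BNC χ → Q ∈ BNC χ → Refines P Q →
    (∑ t ∈ (BNC χ).filter fun t => Refines P t ∧ Refines t Q, μ t Q)
      = if P = Q then 1 else 0) ∧
  (∀ P Q, P ∈ BNC χ → Q ∈ BNC χ → Refines P Q →
    (∑ t ∈ (BNC χ).filter fun t => Refines P t ∧ Refines t Q, μ P t)
      = if P = Q then 1 else 0)

/-- A family of Möbius functions, one for each `n` and `χ`. -/
def MoebiusFamily : Type :=
  ∀ n : ℕ, (Fin n → Bool) → Finset (Finset (Fin n)) → Finset (Finset (Fin n)) → ℂ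

variable {A : Type*} [Ring A] [Algebra ℂ A]

/-- `φ_π(Z_1, …, Z_n) = ∏_{V ∈ π} φ(Z_{k_1} ⋯ Z_{k_m})`, the product over the blocks
`V = {k_1 < ⋯ < k_m}` of `π` of the moments along the blocks. -/
noncomputable def phiPart {n : ℕ} (φ : A →ₗ[ℂ] ℂ) (Z : Fin n → A)
    (P : Finset (Finset (Fin n))) : ℂ :=
  ∏ V ∈ P, φ ((V.sort (· ≤ ·)).map Z).prod

/-- The `(ℓ, r)`-cumulant `κ_P(Z_1, …, Z_n) = ∑_{σ ∈ BNC(χ), σ ≤ P} φ_σ(Z) μ(σ, P)`. -/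
noncomputable def cumulant {n : ℕ} (φ : A →ₗ[ℂ] ℂ) (χ : Fin n → Bool)
    (μ : Finset (Finset (Fin n)) → Finset (Finset (Fin n)) → ℂ)
    (P : Finset (Finset (Fin n))) (Z : Fin n → A) : ℂ :=
  ∑ σ ∈ (BNC χ).filter fun σ => Refines σ P, phiPart φ Z σ * μ σ P


/-- The two-faced pairs `(T 0, S 0)` and `(T 1, S 1)` are bi-freely independent with
respect to `φ` : all mixed `(ℓ,r)`-cumulants vanish. -/
def TwoFacedBiFree {A : Type*} [Ring A] [Algebra ℂ A] (φ : A →ₗ[ℂ] ℂ)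
    (μ : MoebiusFamily) (T S : Fin 2 → A) : Prop :=
  ∀ (n : ℕ), 2 ≤ n → ∀ (χ : Fin n → Bool) (ε : Fin n → Fin 2), (∃ i j, ε i ≠ ε j) →
    cumulant φ χ (μ n χ) (onePart n)
      (fun i => if χ i = true then T (ε i) else S (ε i)) = 0

/-- `(T, S)` is a bi-free central limit distribution : all `(ℓ,r)`-cumulants of order
at least three vanish. -/
def IsBiFreeCentralLimit {A : Type*} [Ring A] [Algebra ℂ A] (φ : A →ₗ[ℂ] ℂ)
    (μ : MoebiusFamily) (T S : A) : Prop :=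
  ∀ (n : ℕ), 3 ≤ n → ∀ χ : Fin n → Bool,
    cumulant φ χ (μ n χ) (onePart n) (fun i => if χ i = true then T else S) = 0

/-- `(T 0, S 0)` and `(T 1, S 1)` have equal second order `(ℓ,r)`-cumulants. -/
def EqualSecondOrderCumulants {A : Type*} [Ring A] [Algebra ℂ A] (φ : A →ₗ[ℂ] ℂ)
    (μ : MoebiusFamily) (T S : Fin 2 → A) : Prop :=
  ∀ χ : Fin 2 → Bool,
    cumulant φ χ (μ 2 χ) (onePart 2) (fun i => if χ i = true then T 0 else S 0)
      = cumulant φ χ (μ 2 χ) (onePart 2) (fun i => if χ i = true then T 1 else S 1)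

end BiFreeNL
section
open BiFreeNL Finset
open scoped Classical
set_option linter.unusedSectionVars false
variable {A : Type*} [Ring A] [Algebra ℂ A]

lemma listProd_factor {n : ℕ} [inst : DecidableEq (Fin n)] (l : List (Fin n)) (hl : l.Nodup)
    (i : Fin n) (hi : i ∈ l) (Z : Fin n → A) :
    ∃ p q : A, ∀ x : A, ((l.map (Function.update Z i x)).prod = p * x * q) := by
  obtain ⟨s, t, rfl⟩ := List.append_of_mem hi
  have hs : i ∉ s := by
    intro h
    have := List.disjoint_of_nodup_append hl h
    simp at this
  have ht : i ∉ t := by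
    have := (List.nodup_append.mp hl).2.1
    simp [List.nodup_cons] at this
    exact this.1
  refine ⟨(s.map Z).prod, (t.map Z).prod, fun x => ?_⟩
  have hsm : s.map (Function.update Z i x) = s.map Z := by
    refine List.map_congr_left fun a ha => ?_
    have hai : a ≠ i := fun h => hs (h ▸ ha)
    exact Function.update_of_ne hai _ _
  have htm : t.map (Function.update Z i x) = t.map Z := by
    refine List.map_congr_left fun a ha => ?_
    have hai : a ≠ i := fun h => ht (h ▸ ha)
    exact Function.update_of_ne hai _ _
  rw [List.map_append, List.prod_append, List.map_cons, List.prod_cons, hsm, htm,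
    Function.update_self, mul_assoc]

lemma phiPart_factor {n : ℕ} [inst : DecidableEq (Fin n)] (φ : A →ₗ[ℂ] ℂ)
    {P : Finset (Finset (Fin n))} (hP : IsPartition P) (i : Fin n) (Z : Fin n → A) :
    ∃ (c₀ : ℂ) (p q : A), ∀ x : A,
      phiPart φ (Function.update Z i x) P = c₀ * φ (p * x * q) := by
  obtain ⟨V₀, ⟨hV₀P, hiV₀⟩, huniq⟩ := hP.2 i
  obtain ⟨p, q, hpq⟩ := listProd_factor (V₀.sort (· ≤ ·)) (Finset.sort_nodup _ _) i
    ((Finset.mem_sort _).mpr hiV₀) Z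
  refine ⟨∏ V ∈ P.erase V₀, φ ((V.sort (· ≤ ·)).map Z).prod, p, q, fun x => ?_⟩
  have hrest : ∀ V ∈ P.erase V₀,
      φ ((V.sort (· ≤ ·)).map (Function.update Z i x)).prod
        = φ ((V.sort (· ≤ ·)).map Z).prod := by
    intro V hV
    have hVne : V ≠ V₀ := (Finset.mem_erase.mp hV).1
    have hVP : V ∈ P := (Finset.mem_erase.mp hV).2
    have hiV : i ∉ V := fun h => hVne (huniq V ⟨hVP, h⟩)
    congr 2
    refine List.map_congr_left fun a ha => ?_
    have hai : a ≠ i := fun h => hiV (h ▸ (Finset.mem_sort _).mp ha)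
    exact Function.update_of_ne hai _ _
  rw [phiPart, ← Finset.mul_prod_erase _ _ hV₀P, Finset.prod_congr rfl hrest, hpq, mul_comm]

noncomputable def phiML {n : ℕ} (φ : A →ₗ[ℂ] ℂ) (P : Finset (Finset (Fin n)))
    (hP : IsPartition P) : MultilinearMap ℂ (fun _ : Fin n => A) ℂ where
  toFun Z := phiPart φ Z P
  map_update_add' {inst} Z i x y := by
    obtain ⟨c₀, p, q, h⟩ := phiPart_factor (inst := inst) φ hP i Z
    simp only [h, mul_add, add_mul, map_add]
  map_update_smul' {inst} Z i c x := by
    obtain ⟨c₀, p, q, h⟩ := phiPart_factor (inst := inst) φ hP i Z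
    have hc : p * (c • x) * q = c • (p * x * q) := by
      rw [mul_smul_comm, smul_mul_assoc]
    simp only [h, hc, map_smul, smul_eq_mul]
    ring

lemma mem_BNC_isPartition {n : ℕ} {χ : Fin n → Bool} {σ : Finset (Finset (Fin n))}
    (h : σ ∈ BNC χ) : IsPartition σ :=
  ((Finset.mem_filter.mp h).2).1

lemma cumulant_expand {n : ℕ} (φ : A →ₗ[ℂ] ℂ) (χ : Fin n → Bool)
    (μn : Finset (Finset (Fin n)) → Finset (Finset (Fin n)) → ℂ)
    (P : Finset (Finset (Fin n))) (a : Fin n → Fin 2 → ℂ) (W : Fin n → Fin 2 → A) :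
    cumulant φ χ μn P (fun i => a i 0 • W i 0 + a i 1 • W i 1)
      = ∑ ε : Fin n → Fin 2, (∏ i, a i (ε i)) *
          cumulant φ χ μn P (fun i => W i (ε i)) := by
  unfold cumulant
  have key : ∀ σ ∈ (BNC χ).filter fun σ => Refines σ P,
      phiPart φ (fun i => a i 0 • W i 0 + a i 1 • W i 1) σ
        = ∑ ε : Fin n → Fin 2, (∏ i, a i (ε i)) * phiPart φ (fun i => W i (ε i)) σ := by
    intro σ hσ
    have hpart := mem_BNC_isPartition (Finset.mem_filter.mp hσ).1
    have h1 : (fun i => a i 0 • W i 0 + a i 1 • W i 1)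
        = fun i => ∑ k : Fin 2, a i k • W i k := by
      funext i; rw [Fin.sum_univ_two]
    calc phiPart φ (fun i => a i 0 • W i 0 + a i 1 • W i 1) σ
        = phiML φ σ hpart (fun i => ∑ k : Fin 2, a i k • W i k) := by rw [h1]; rfl
      _ = ∑ ε : Fin n → Fin 2, phiML φ σ hpart (fun i => a i (ε i) • W i (ε i)) :=
          (phiML φ σ hpart).map_sum (fun i k => a i k • W i k)
      _ = ∑ ε : Fin n → Fin 2, (∏ i, a i (ε i)) * phiPart φ (fun i => W i (ε i)) σ := by
          refine Finset.sum_congr rfl fun ε _ => ?_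
          rw [(phiML φ σ hpart).map_smul_univ]
          rfl
  calc ∑ σ ∈ (BNC χ).filter fun σ => Refines σ P,
        phiPart φ (fun i => a i 0 • W i 0 + a i 1 • W i 1) σ * μn σ P
      = ∑ σ ∈ (BNC χ).filter fun σ => Refines σ P, ∑ ε : Fin n → Fin 2,
          ((∏ i, a i (ε i)) * phiPart φ (fun i => W i (ε i)) σ) * μn σ P := by
        refine Finset.sum_congr rfl fun σ hσ => ?_
        rw [key σ hσ, Finset.sum_mul]
    _ = ∑ ε : Fin n → Fin 2, ∑ σ ∈ (BNC χ).filter fun σ => Refines σ P,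
          ((∏ i, a i (ε i)) * phiPart φ (fun i => W i (ε i)) σ) * μn σ P :=
        Finset.sum_comm
    _ = ∑ ε : Fin n → Fin 2, (∏ i, a i (ε i)) *
          ∑ σ ∈ (BNC χ).filter fun σ => Refines σ P,
            phiPart φ (fun i => W i (ε i)) σ * μn σ P := by
        refine Finset.sum_congr rfl fun ε _ => ?_
        rw [Finset.mul_sum]
        exact Finset.sum_congr rfl fun σ _ => by ring

end
section
open BiFreeNL Finset
set_option linter.unusedSectionVars false
variable {A : Type*} [Ring A] [Algebra ℂ A]

noncomputable def bcoef (θ : ℝ) : Fin 2 → Fin 2 → ℂ :=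
  ![![(Real.cos θ : ℂ), (Real.sin θ : ℂ)], ![-(Real.sin θ : ℂ), (Real.cos θ : ℂ)]]

lemma main_eq (φ : A →ₗ[ℂ] ℂ) (μ : MoebiusFamily) (T S : Fin 2 → A)
    (hbf : TwoFacedBiFree φ μ T S) (θ : ℝ)
    (hbf34 : TwoFacedBiFree φ μ
      ![(Real.cos θ : ℂ) • T 0 + (Real.sin θ : ℂ) • T 1,
        (-(Real.sin θ : ℂ)) • T 0 + (Real.cos θ : ℂ) • T 1]
      ![(Real.cos θ : ℂ) • S 0 + (Real.sin θ : ℂ) • S 1,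
        (-(Real.sin θ : ℂ)) • S 0 + (Real.cos θ : ℂ) • S 1])
    (n : ℕ) (hn : 2 ≤ n) (χ : Fin n → Bool) (ε' : Fin n → Fin 2)
    (hnc : ∃ i j, ε' i ≠ ε' j) :
    (∏ i, bcoef θ (ε' i) 0) *
        cumulant φ χ (μ n χ) (onePart n) (fun i => if χ i = true then T 0 else S 0)
      + (∏ i, bcoef θ (ε' i) 1) *
        cumulant φ χ (μ n χ) (onePart n) (fun i => if χ i = true then T 1 else S 1) = 0 := by
  have h0 := hbf34 n hn χ ε' hnc
  have harg : (fun i => if χ i = true then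
        (![(Real.cos θ : ℂ) • T 0 + (Real.sin θ : ℂ) • T 1,
          (-(Real.sin θ : ℂ)) • T 0 + (Real.cos θ : ℂ) • T 1]) (ε' i)
        else
        (![(Real.cos θ : ℂ) • S 0 + (Real.sin θ : ℂ) • S 1,
          (-(Real.sin θ : ℂ)) • S 0 + (Real.cos θ : ℂ) • S 1]) (ε' i))
      = fun i => bcoef θ (ε' i) 0 • (if χ i = true then T 0 else S 0)
          + bcoef θ (ε' i) 1 • (if χ i = true then T 1 else S 1) := by
    funext i
    have h2 : ε' i = 0 ∨ ε' i = 1 := by omega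
    rcases h2 with h2 | h2 <;> rw [h2] <;> cases hχ : χ i <;>
      simp [bcoef, Matrix.cons_val_zero, Matrix.cons_val_one, Matrix.head_cons]
  rw [harg] at h0
  have h1 : (∑ ε : Fin n → Fin 2, (∏ i, bcoef θ (ε' i) (ε i)) *
      cumulant φ χ (μ n χ) (onePart n)
        (fun i => if χ i = true then T (ε i) else S (ε i))) = 0 :=
    (cumulant_expand φ χ (μ n χ) (onePart n) (fun i => bcoef θ (ε' i))
      (fun i k => if χ i = true then T k else S k)).symm.trans h0
  classical
  have hvanish : ∀ x ∈ (univ : Finset (Fin n → Fin 2)),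
      x ∉ ({(fun _ => 0), (fun _ => 1)} : Finset (Fin n → Fin 2)) →
      (∏ i, bcoef θ (ε' i) (x i)) *
        cumulant φ χ (μ n χ) (onePart n)
          (fun i => if χ i = true then T (x i) else S (x i)) = 0 := by
    intro x _ hnotin
    simp only [Finset.mem_insert, Finset.mem_singleton, not_or] at hnotin
    obtain ⟨hx0, hx1⟩ := hnotin
    have hne : ∃ i j, x i ≠ x j := by
      by_contra hcon
      push_neg at hcon
      rcases (show x ⟨0, by omega⟩ = 0 ∨ x ⟨0, by omega⟩ = 1 by omega) with h | h
      · exact hx0 (funext fun j => (hcon j ⟨0, by omega⟩).trans h)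
      · exact hx1 (funext fun j => (hcon j ⟨0, by omega⟩).trans h)
    rw [hbf n hn χ x hne, mul_zero]
  rw [← Finset.sum_subset (Finset.subset_univ _) hvanish] at h1
  have hne01 : (fun _ : Fin n => (0 : Fin 2)) ≠ (fun _ => 1) := by
    intro h
    have := congrFun h ⟨0, by omega⟩
    simp at this
  rw [Finset.sum_pair hne01] at h1
  exact h1

end

open BiFreeNL in
/-- **Bi-Free Kac/Loeve Theorem, forward direction.** -/
theorem kac_loeve_forward
    {A : Type*} [Ring A] [Algebra ℂ A]
    (φ : A →ₗ[ℂ] ℂ) (hφ : φ 1 = 1)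
    (μ : MoebiusFamily) (hμ : ∀ (n : ℕ) (χ : Fin n → Bool), IsMoebius χ (μ n χ))
    (T S : Fin 2 → A)
    (hcent : ∀ k, φ (T k) = 0 ∧ φ (S k) = 0)
    (hbf : TwoFacedBiFree φ μ T S)
    (θ : ℝ) (hθ : θ ∈ Set.Ioo 0 (Real.pi / 2))
    (hbf34 : TwoFacedBiFree φ μ
      ![(Real.cos θ : ℂ) • T 0 + (Real.sin θ : ℂ) • T 1,
        (-(Real.sin θ : ℂ)) • T 0 + (Real.cos θ : ℂ) • T 1]
      ![(Real.cos θ : ℂ) • S 0 + (Real.sin θ : ℂ) • S 1,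
        (-(Real.sin θ : ℂ)) • S 0 + (Real.cos θ : ℂ) • S 1]) :
    (IsBiFreeCentralLimit φ μ (T 0) (S 0) ∧ IsBiFreeCentralLimit φ μ (T 1) (S 1))
      ∧ EqualSecondOrderCumulants φ μ T S := by
  classical
  obtain ⟨hθ0, hθ1⟩ := hθ
  have hcosR : 0 < Real.cos θ :=
    Real.cos_pos_of_mem_Ioo ⟨by linarith [Real.pi_pos], hθ1⟩
  have hsinR : 0 < Real.sin θ :=
    Real.sin_pos_of_pos_of_lt_pi hθ0 (by linarith [Real.pi_pos])
  have hcos : (Real.cos θ : ℂ) ≠ 0 := by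
    exact_mod_cast ne_of_gt hcosR
  have hsin : (Real.sin θ : ℂ) ≠ 0 := by
    exact_mod_cast ne_of_gt hsinR
  have pyth : (Real.sin θ : ℂ) * (Real.sin θ : ℂ)
      + (Real.cos θ : ℂ) * (Real.cos θ : ℂ) = 1 := by
    norm_cast
    linear_combination Real.sin_sq_add_cos_sq θ
  have b00 : bcoef θ 0 0 = (Real.cos θ : ℂ) := by simp [bcoef]
  have b01 : bcoef θ 0 1 = (Real.sin θ : ℂ) := by simp [bcoef]
  have b10 : bcoef θ 1 0 = -(Real.sin θ : ℂ) := by simp [bcoef]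
  have b11 : bcoef θ 1 1 = (Real.cos θ : ℂ) := by simp [bcoef]
  have central : ∀ n : ℕ, 3 ≤ n → ∀ χ : Fin n → Bool,
      cumulant φ χ (μ n χ) (onePart n) (fun i => if χ i = true then T 0 else S 0) = 0 ∧
      cumulant φ χ (μ n χ) (onePart n) (fun i => if χ i = true then T 1 else S 1) = 0 := by
    intro n hn χ
    set i0 : Fin n := ⟨0, by omega⟩ with hi0
    set i1 : Fin n := ⟨1, by omega⟩ with hi1
    set i2 : Fin n := ⟨2, by omega⟩ with hi2
    have hne01 : i0 ≠ i1 := by simp [hi0, hi1, Fin.ext_iff]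
    have hne10 : i1 ≠ i0 := by simp [hi0, hi1, Fin.ext_iff]
    have hne20 : i2 ≠ i0 := by simp [hi0, hi2, Fin.ext_iff]
    have hne21 : i2 ≠ i1 := by simp [hi1, hi2, Fin.ext_iff]
    set εA : Fin n → Fin 2 := fun i => if i = i0 then 1 else 0 with hεA
    set εB : Fin n → Fin 2 := fun i => if i = i0 then 1 else if i = i1 then 1 else 0
      with hεB
    have hA0 := main_eq φ μ T S hbf θ hbf34 n (by omega) χ εA
      ⟨i0, i1, by simp [hεA, if_pos rfl, if_neg hne10]⟩
    have hB0 := main_eq φ μ T S hbf θ hbf34 n (by omega) χ εB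
      ⟨i0, i2, by simp [hεB, if_pos rfl, if_neg hne20, if_neg hne21]⟩
    have prodA : ∀ k : Fin 2, (∏ i, bcoef θ (εA i) k)
        = bcoef θ 1 k * (bcoef θ 0 k) ^ (n - 1) := by
      intro k
      have hrest : ∏ x ∈ (univ : Finset (Fin n)).erase i0, bcoef θ (εA x) k
          = (bcoef θ 0 k) ^ (n - 1) := by
        rw [Finset.prod_congr rfl (fun i hi => by
            rw [show εA i = 0 from if_neg (Finset.mem_erase.mp hi).1]),
          Finset.prod_const, Finset.card_erase_of_mem (Finset.mem_univ _),
          Finset.card_univ, Fintype.card_fin]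
      rw [← Finset.mul_prod_erase _ _ (Finset.mem_univ i0), hrest,
        show εA i0 = 1 from if_pos rfl]
    have prodB : ∀ k : Fin 2, (∏ i, bcoef θ (εB i) k)
        = bcoef θ 1 k * (bcoef θ 1 k * (bcoef θ 0 k) ^ (n - 2)) := by
      intro k
      have h1mem : i1 ∈ (univ : Finset (Fin n)).erase i0 := by
        simp [Finset.mem_erase, hne10]
      have hrest : ∏ x ∈ ((univ : Finset (Fin n)).erase i0).erase i1, bcoef θ (εB x) k
          = (bcoef θ 0 k) ^ (n - 2) := by
        rw [Finset.prod_congr rfl (fun i hi => by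
            have hi1' : i ≠ i1 := (Finset.mem_erase.mp hi).1
            have hi0' : i ≠ i0 := (Finset.mem_erase.mp (Finset.mem_erase.mp hi).2).1
            rw [show εB i = 0 by simp [hεB, hi0', hi1']]),
          Finset.prod_const, Finset.card_erase_of_mem h1mem,
          Finset.card_erase_of_mem (Finset.mem_univ _), Finset.card_univ, Fintype.card_fin]
        congr 1 <;> omega
      rw [← Finset.mul_prod_erase _ _ (Finset.mem_univ i0),
        ← Finset.mul_prod_erase _ _ h1mem, hrest,
        show εB i0 = 1 by simp [hεB],
        show εB i1 = 1 by simp [hεB, hne10]]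
    rw [prodA 0, prodA 1, b00, b01, b10, b11] at hA0
    rw [prodB 0, prodB 1, b00, b01, b10, b11] at hB0
    set κ0 := cumulant φ χ (μ n χ) (onePart n) (fun i => if χ i = true then T 0 else S 0)
      with hκ0def
    set κ1 := cumulant φ χ (μ n χ) (onePart n) (fun i => if χ i = true then T 1 else S 1)
      with hκ1def
    obtain ⟨m, rfl⟩ : ∃ m, n = m + 3 := ⟨n - 3, by omega⟩
    have e1 : m + 3 - 1 = m + 2 := by omega
    have e2 : m + 3 - 2 = m + 1 := by omega
    rw [e1] at hA0
    rw [e2] at hB0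
    have hκ1 : κ1 = 0 := by
      have h2 : (Real.cos θ : ℂ) * (Real.sin θ : ℂ) ^ (m + 1) * κ1 = 0 := by
        linear_combination (Real.sin θ : ℂ) * hA0 + (Real.cos θ : ℂ) * hB0
          - (Real.cos θ : ℂ) * (Real.sin θ : ℂ) ^ (m + 1) * κ1 * pyth
      rcases mul_eq_zero.mp h2 with h | h
      · rcases mul_eq_zero.mp h with h | h
        · exact absurd h hcos
        · exact absurd h (pow_ne_zero _ hsin)
      · exact h
    refine ⟨?_, hκ1⟩
    rw [hκ1] at hA0
    have h3 : -(Real.sin θ : ℂ) * (Real.cos θ : ℂ) ^ (m + 2) * κ0 = 0 := by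
      linear_combination hA0
    rcases mul_eq_zero.mp h3 with h | h
    · rcases mul_eq_zero.mp h with h | h
      · exact absurd h (neg_ne_zero.mpr hsin)
      · exact absurd h (pow_ne_zero _ hcos)
    · exact h
  refine ⟨⟨fun n hn χ => (central n hn χ).1, fun n hn χ => (central n hn χ).2⟩, ?_⟩
  intro χ
  set εA : Fin 2 → Fin 2 := fun i => if i = 0 then 1 else 0 with hεA
  have hA0 := main_eq φ μ T S hbf θ hbf34 2 le_rfl χ εA
    ⟨0, 1, by simp [hεA]⟩
  have prodA : ∀ k : Fin 2, (∏ i, bcoef θ (εA i) k) = bcoef θ 1 k * bcoef θ 0 k := by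
    intro k
    rw [show (univ : Finset (Fin 2)) = {0, 1} from rfl, Finset.prod_pair (by norm_num)]
    rw [show εA 0 = 1 from if_pos rfl, show εA 1 = 0 from if_neg (by norm_num)]
  rw [prodA 0, prodA 1, b00, b01, b10, b11] at hA0
  set κ0 := cumulant φ χ (μ 2 χ) (onePart 2) (fun i => if χ i = true then T 0 else S 0)
  set κ1 := cumulant φ χ (μ 2 χ) (onePart 2) (fun i => if χ i = true then T 1 else S 1)
  have h4 : (Real.cos θ : ℂ) * (Real.sin θ : ℂ) * (κ1 - κ0) = 0 := by
    linear_combination hA0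
  rcases mul_eq_zero.mp h4 with h | h
  · rcases mul_eq_zero.mp h with h | h
    · exact absurd h hcos
    · exact absurd h hsin
  · exact (sub_eq_zero.mp h).symm
end

section
/- (Boolean moment and cumulant formulae, scalar case.) Let (A, φ) be a non-commutative probability space and let {(C'_k, D'_k)}_{k∈K} be a bi-free Boolean system with respect to φ. Let χ : {1,…,2n} → {ℓ,r} be alternating, let ε : {1,…,2n} → K satisfy ε(2m−1) = ε(2m) for all m ∈ {1,…,n}, and let T_m ∈ C'_{ε(2m−1)} and S_m ∈ D'_{ε(2m)} for m ∈ {1,…,n}. Then: (i) φ(T_1 S_1 T_2 S_2 ⋯ T_n S_n) = Σ_{π ∈ BNC_b(χ)} κ_π(T_1, S_1, …, T_n, S_n); (ii) κ_{1_χ}(T_1, S_1, …, T_n, S_n) = Σ_{π ∈ BNC_b(χ)} φ_π(T_1, S_1, …, T_n, S_n)·μ_BNC(π, 1_χ); and (iii) κ_{1_χ}(T_1, S_1, …, T_n, S_n) = 0 unless ε is constant. -/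
open Finset

namespace BiFreeNL

open scoped Classical

variable {A : Type*} [Ring A] [Algebra ℂ A]

/-- The family of pairs of faces `{(C k, D k)}_{k ∈ K}` is bi-freely independent with
respect to `φ` : `κ_{1_χ}(Z_1, …, Z_n) = 0` whenever `ε` is non-constant, `Z_j ∈ C (ε j)`
when `χ j = ℓ` and `Z_j ∈ D (ε j)` when `χ j = r`. -/
def BiFreeFamily {A : Type*} [Ring A] [Algebra ℂ A] {K : Type*} (φ : A →ₗ[ℂ] ℂ)
    (μ : MoebiusFamily) (C D : K → Set A) : Prop :=
  ∀ (n : ℕ), 2 ≤ n → ∀ (χ : Fin n → Bool) (ε : Fin n → K), (∃ i j, ε i ≠ ε j) →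
    ∀ Z : Fin n → A,
      (∀ i, (χ i = true → Z i ∈ C (ε i)) ∧ (χ i = false → Z i ∈ D (ε i))) →
      cumulant φ χ (μ n χ) (onePart n) Z = 0

/-- The subsets `{S k}_{k ∈ K}` are Boolean independent with respect to `φ` :
`φ(Z_1 ⋯ Z_n) = φ(Z_1) ⋯ φ(Z_n)` whenever `Z_m ∈ S (k m)` and consecutive indices
`k m` differ. -/
def BooleanIndependent {A : Type*} [Ring A] [Algebra ℂ A] {K : Type*} (φ : A →ₗ[ℂ] ℂ)
    (S : K → Set A) : Prop :=
  ∀ (n : ℕ) (k : Fin n → K), (∀ i j : Fin n, (j : ℕ) = (i : ℕ) + 1 → k i ≠ k j) →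
    ∀ Z : Fin n → A, (∀ i, Z i ∈ S (k i)) →
      φ (List.ofFn Z).prod = ∏ i, φ (Z i)

/-- The set of products `{T * S | T ∈ C, S ∈ D}`. -/
def prodSet {A : Type*} [Ring A] (C D : Set A) : Set A :=
  {x | ∃ T ∈ C, ∃ S ∈ D, x = T * S}


/-- `{(C' k, D' k)}_{k ∈ K}` is a bi-free Boolean system with respect to `φ` :
the subsets sit inside a bi-free family of pairs of faces, `ℂ·C'_k ⊆ C'_k`,
products of two elements of `C'_k` (or of `D'_k`) vanish, and alternating moments
starting and ending in the same face vanish. -/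
def BiFreeBooleanSystem {A : Type*} [Ring A] [Algebra ℂ A] {K : Type*} (φ : A →ₗ[ℂ] ℂ)
    (μ : MoebiusFamily) (C' D' : K → Set A) : Prop :=
  ∃ C D : K → Subalgebra ℂ A,
    BiFreeFamily φ μ (fun k => (C k : Set A)) (fun k => (D k : Set A)) ∧
    (∀ k, C' k ⊆ (C k : Set A)) ∧ (∀ k, D' k ⊆ (D k : Set A)) ∧
    (∀ k (z : ℂ), ∀ x ∈ C' k, z • x ∈ C' k) ∧
    (∀ k, ∀ x ∈ C' k, ∀ y ∈ C' k, x * y = 0) ∧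
    (∀ k, ∀ x ∈ D' k, ∀ y ∈ D' k, x * y = 0) ∧
    (∀ k (m : ℕ) (x : Fin (m + 1) → A) (y : Fin m → A),
      (∀ i, x i ∈ C' k) → (∀ i, y i ∈ D' k) →
      φ (x 0 * (List.ofFn fun i : Fin m => y i * x i.succ).prod) = 0) ∧
    (∀ k (m : ℕ) (y : Fin (m + 1) → A) (x : Fin m → A),
      (∀ i, y i ∈ D' k) → (∀ i, x i ∈ C' k) →
      φ (y 0 * (List.ofFn fun i : Fin m => x i * y i.succ).prod) = 0)

/-- The alternating map `χ : {1, …, 2n} → {ℓ, r}` (left on odd positions, i.e. even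
`Fin`-indices). -/
def altChi (n : ℕ) : Fin (2 * n) → Bool := fun i => decide ((i : ℕ) % 2 = 0)

/-- The index `2m - 1` (1-indexed), i.e. the position of `T_m`. -/
def dIdx {n : ℕ} (m : Fin n) : Fin (2 * n) := ⟨2 * (m : ℕ), by have := m.isLt; omega⟩

/-- The index `2m` (1-indexed), i.e. the position of `S_m`. -/
def dIdx' {n : ℕ} (m : Fin n) : Fin (2 * n) := ⟨2 * (m : ℕ) + 1, by have := m.isLt; omega⟩

/-- The Boolean bi-non-crossing partitions `BNC_b(χ)` for alternating `χ` : those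
`π ∈ BNC(χ)` in which `2k - 1` and `2k` always share a block. -/
noncomputable def BNCb (n : ℕ) : Finset (Finset (Finset (Fin (2 * n)))) :=
  (BNC (altChi n)).filter fun P => ∀ m : Fin n, SameBlock P (dIdx m) (dIdx' m)

/-- The tuple `(T_1, S_1, T_2, S_2, …, T_n, S_n)`. -/
def interleave {A : Type*} {n : ℕ} (T S : Fin n → A) : Fin (2 * n) → A :=
  fun i => if (i : ℕ) % 2 = 0 then T ⟨(i : ℕ) / 2, by have := i.isLt; omega⟩
           else S ⟨(i : ℕ) / 2, by have := i.isLt; omega⟩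

end BiFreeNL
namespace BiFreeNL

open scoped Classical
variable {p : ℕ}

lemma chiRank_lt_left_left {χ : Fin p → Bool} {i j : Fin p} (hi : χ i = true) (hj : χ j = true) :
    chiRank χ i < chiRank χ j ↔ i < j := by
  unfold chiRank
  rw [if_pos hi, if_pos hj]
  constructor
  · intro h
    by_contra hij
    push_neg at hij
    have hle : ((univ : Finset (Fin p)).filter fun k => χ k = true ∧ k < j).card
        ≤ ((univ : Finset (Fin p)).filter fun k => χ k = true ∧ k < i).card := by
      apply Finset.card_le_card
      intro x hx
      simp only [Finset.mem_filter] at *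
      exact ⟨hx.1, hx.2.1, lt_of_lt_of_le hx.2.2 hij⟩
    omega
  · intro h
    apply Finset.card_lt_card
    rw [Finset.ssubset_iff_of_subset]
    · exact ⟨i, by simp [hi, h], by simp⟩
    · intro x hx
      simp only [Finset.mem_filter] at *
      exact ⟨hx.1, hx.2.1, lt_trans hx.2.2 h⟩

lemma chiRank_lt_right_right {χ : Fin p → Bool} {i j : Fin p} (hi : χ i = false)
    (hj : χ j = false) : chiRank χ i < chiRank χ j ↔ j < i := by
  unfold chiRank
  rw [if_neg (by simp [hi]), if_neg (by simp [hj]), Nat.add_lt_add_iff_left]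
  constructor
  · intro h
    by_contra hij
    push_neg at hij
    have hle : ((univ : Finset (Fin p)).filter fun k => χ k = false ∧ j < k).card
        ≤ ((univ : Finset (Fin p)).filter fun k => χ k = false ∧ i < k).card := by
      apply Finset.card_le_card
      intro x hx
      simp only [Finset.mem_filter] at *
      exact ⟨hx.1, hx.2.1, lt_of_le_of_lt hij hx.2.2⟩
    omega
  · intro h
    apply Finset.card_lt_card
    rw [Finset.ssubset_iff_of_subset]
    · exact ⟨i, by simp [hi, h], by simp⟩
    · intro x hx
      simp only [Finset.mem_filter] at *
      exact ⟨hx.1, hx.2.1, lt_trans h hx.2.2⟩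

lemma chiRank_lt_left_right {χ : Fin p → Bool} {i j : Fin p} (hi : χ i = true)
    (hj : χ j = false) : chiRank χ i < chiRank χ j := by
  unfold chiRank
  rw [if_pos hi, if_neg (by simp [hj])]
  have hlt : ((univ : Finset (Fin p)).filter fun k => χ k = true ∧ k < i).card
      < ((univ : Finset (Fin p)).filter fun k => χ k = true).card := by
    apply Finset.card_lt_card
    rw [Finset.ssubset_iff_of_subset]
    · exact ⟨i, by simp [hi], by simp⟩
    · intro x hx
      simp only [Finset.mem_filter] at *
      exact ⟨hx.1, hx.2.1⟩
  omega

lemma chiRank_lt_comp {q : ℕ} {χ : Fin p → Bool} (f : Fin q → Fin p) (hf : StrictMono f)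
    {a b : Fin q} :
    chiRank (χ ∘ f) a < chiRank (χ ∘ f) b ↔ chiRank χ (f a) < chiRank χ (f b) := by
  have hca : ∀ x : Fin q, (χ ∘ f) x = χ (f x) := fun _ => rfl
  cases ha : χ (f a) <;> cases hb : χ (f b)
  · rw [chiRank_lt_right_right (χ := χ ∘ f) ((hca a).trans ha) ((hca b).trans hb),
      chiRank_lt_right_right ha hb, hf.lt_iff_lt]
  · constructor
    · intro h
      exact absurd h
        (lt_asymm (chiRank_lt_left_right (χ := χ ∘ f) ((hca b).trans hb) ((hca a).trans ha)))
    · intro h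
      exact absurd h (lt_asymm (chiRank_lt_left_right hb ha))
  · constructor
    · intro _
      exact chiRank_lt_left_right ha hb
    · intro _
      exact chiRank_lt_left_right (χ := χ ∘ f) ((hca a).trans ha) ((hca b).trans hb)
  · rw [chiRank_lt_left_left (χ := χ ∘ f) ((hca a).trans ha) ((hca b).trans hb),
      chiRank_lt_left_left ha hb, hf.lt_iff_lt]

lemma block_eq_block {P : Finset (Finset (Fin p))} (hP : IsPartition P)
    {V W : Finset (Fin p)} {i : Fin p} (hV : V ∈ P) (hW : W ∈ P) (hiV : i ∈ V)
    (hiW : i ∈ W) : V = W := by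
  obtain ⟨U, -, hUuniq⟩ := hP.2 i
  rw [hUuniq V ⟨hV, hiV⟩, hUuniq W ⟨hW, hiW⟩]

lemma refines_refl (P : Finset (Finset (Fin p))) : Refines P P :=
  fun V hV => ⟨V, hV, subset_rfl⟩

lemma refines_onePart (P : Finset (Finset (Fin p))) : Refines P (onePart p) :=
  fun V _ => ⟨univ, by simp [onePart], subset_univ V⟩

lemma sameBlock_of_refines {σ π : Finset (Finset (Fin p))} {i j : Fin p}
    (h : SameBlock σ i j) (hr : Refines σ π) : SameBlock π i j := by
  obtain ⟨B, hB, hiB, hjB⟩ := h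
  obtain ⟨W, hW, hBW⟩ := hr B hB
  exact ⟨W, hW, hBW hiB, hBW hjB⟩

lemma isPartition_onePart (hp : 0 < p) : IsPartition (onePart p) := by
  constructor
  · intro V hV
    rw [onePart, mem_singleton] at hV
    subst hV
    exact ⟨⟨0, hp⟩, mem_univ _⟩
  · intro i
    refine ⟨univ, ⟨by simp [onePart], mem_univ i⟩, ?_⟩
    intro W hW
    have := hW.1
    rw [onePart, mem_singleton] at this
    exact this

lemma onePart_mem_BNC (hp : 0 < p) (χ : Fin p → Bool) : onePart p ∈ BNC χ := by
  rw [BNC, mem_filter]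
  refine ⟨mem_univ _, isPartition_onePart hp, ?_⟩
  intro u₁ v₁ u₂ v₂ _ _ _ _ _
  exact ⟨univ, by simp [onePart], mem_univ _, mem_univ _⟩

lemma mem_BNC_iff {χ : Fin p → Bool} {P : Finset (Finset (Fin p))} :
    P ∈ BNC χ ↔ IsBiNonCrossing χ P := by
  rw [BNC, mem_filter]
  simp

lemma eq_onePart_of_onePart_refines {t : Finset (Finset (Fin p))} (ht : IsPartition t)
    (h : Refines (onePart p) t) (hp : 0 < p) : t = onePart p := by
  obtain ⟨W, hW, hUW⟩ := h univ (by simp [onePart])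
  have hWuniv : W = univ := univ_subset_iff.mp hUW
  subst hWuniv
  apply Finset.ext
  intro B
  rw [onePart, mem_singleton]
  constructor
  · intro hB
    obtain ⟨b, hb⟩ := ht.1 B hB
    exact block_eq_block ht hB hW hb (mem_univ b)
  · intro hB
    subst hB
    exact hW

lemma block_card_lt {σ : Finset (Finset (Fin p))} (hσ : IsPartition σ)
    (hne : σ ≠ onePart p) {V : Finset (Fin p)} (hV : V ∈ σ) : V.card < p := by
  rcases lt_or_eq_of_le (Finset.card_le_card (subset_univ V)) with h | h
  · simpa using h
  · exfalso
    apply hne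
    have hVuniv : V = univ := Finset.eq_of_subset_of_card_le (subset_univ V) (by simp [h])
    apply Finset.ext
    intro B
    rw [onePart, mem_singleton]
    constructor
    · intro hB
      obtain ⟨b, hb⟩ := hσ.1 B hB
      rw [← hVuniv]
      exact block_eq_block hσ hB hV hb (by rw [hVuniv]; exact mem_univ b)
    · intro hB
      subst hB
      rw [← hVuniv]
      exact hV

/-! ### The increasing enumeration of a finset of `Fin p` -/

noncomputable def emb (V : Finset (Fin p)) : Fin V.card → Fin p :=
  fun j => V.orderEmbOfFin rfl j

lemma emb_strictMono (V : Finset (Fin p)) : StrictMono (emb V) :=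
  (V.orderEmbOfFin rfl).strictMono

lemma emb_mem (V : Finset (Fin p)) (j : Fin V.card) : emb V j ∈ V :=
  Finset.orderEmbOfFin_mem V rfl j

lemma emb_inj (V : Finset (Fin p)) : Function.Injective (emb V) :=
  (emb_strictMono V).injective

lemma emb_surj {V : Finset (Fin p)} {i : Fin p} (hi : i ∈ V) : ∃ j, emb V j = i := by
  have : (i : Fin p) ∈ Set.range (V.orderEmbOfFin rfl) := by
    rw [Finset.range_orderEmbOfFin]
    exact hi
  exact this

lemma sort_map_emb {β : Type*} (V : Finset (Fin p)) (Z : Fin p → β) :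
    (V.sort (· ≤ ·)).map Z = List.ofFn (fun j => Z (emb V j)) := by
  apply List.ext_getElem
  · simp [Finset.length_sort]
  · intro i h1 h2
    simp only [List.getElem_map, List.getElem_ofFn]
    rfl

/-! ### Alternating blocks and relative partitions -/

variable {K : Type*}

def AltWord (χ : Fin p → Bool) (k : Fin p → K) (B : Finset (Fin p)) : Prop :=
  B.Nonempty ∧ (∀ i ∈ B, ∀ j ∈ B, k i = k j) ∧
  (∀ i ∈ B, ∀ j ∈ B, i < j → (∀ l ∈ B, ¬(i < l ∧ l < j)) → χ i ≠ χ j) ∧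
  (∃ i ∈ B, ∃ j ∈ B, (∀ x ∈ B, i ≤ x ∧ x ≤ j) ∧ χ i ≠ χ j)

def RelPart (χ : Fin p → Bool) (S : Finset (Fin p)) (ρ : Finset (Finset (Fin p))) : Prop :=
  (∀ B ∈ ρ, B.Nonempty ∧ B ⊆ S) ∧ (∀ i ∈ S, ∃! B : Finset (Fin p), B ∈ ρ ∧ i ∈ B) ∧
  ∀ u₁ v₁ u₂ v₂ : Fin p, chiRank χ u₁ < chiRank χ v₁ → chiRank χ v₁ < chiRank χ u₂ →
    chiRank χ u₂ < chiRank χ v₂ → SameBlock ρ u₁ u₂ → SameBlock ρ v₁ v₂ → SameBlock ρ u₁ v₁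

lemma relPart_block_eq {χ : Fin p → Bool} {S : Finset (Fin p)} {ρ : Finset (Finset (Fin p))}
    (hρ : RelPart χ S ρ) {B C : Finset (Fin p)} {i : Fin p} (hB : B ∈ ρ) (hC : C ∈ ρ)
    (hiB : i ∈ B) (hiC : i ∈ C) : B = C := by
  have hiS : i ∈ S := (hρ.1 B hB).2 hiB
  obtain ⟨U, -, hUuniq⟩ := hρ.2.1 i hiS
  rw [hUuniq B ⟨hB, hiB⟩, hUuniq C ⟨hC, hiC⟩]

lemma pushforward_relPart {V : Finset (Fin p)} {χ : Fin p → Bool}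
    {P : Finset (Finset (Fin V.card))} (hP : P ∈ BNC (χ ∘ emb V)) :
    RelPart χ V (P.image (fun B => B.image (emb V))) := by
  rw [mem_BNC_iff] at hP
  obtain ⟨⟨hPne, hPcov⟩, hPcross⟩ := hP
  refine ⟨?_, ?_, ?_⟩
  · intro B hB
    obtain ⟨B₀, hB₀, rfl⟩ := Finset.mem_image.mp hB
    refine ⟨(hPne B₀ hB₀).image _, ?_⟩
    intro x hx
    obtain ⟨a, -, rfl⟩ := Finset.mem_image.mp hx
    exact emb_mem V a
  · intro i hi
    obtain ⟨a, rfl⟩ := emb_surj hi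
    obtain ⟨B₀, ⟨hB₀, haB₀⟩, huniq⟩ := hPcov a
    refine ⟨B₀.image (emb V), ⟨Finset.mem_image_of_mem _ hB₀, Finset.mem_image_of_mem _ haB₀⟩, ?_⟩
    intro C ⟨hC, hiC⟩
    obtain ⟨C₀, hC₀, rfl⟩ := Finset.mem_image.mp hC
    obtain ⟨a', ha'C₀, ha'⟩ := Finset.mem_image.mp hiC
    have : a' = a := emb_inj V ha'
    subst this
    rw [huniq C₀ ⟨hC₀, ha'C₀⟩]
  · intro u₁ v₁ u₂ v₂ h1 h2 h3 hu hv
    obtain ⟨C, hC, hu1, hu2⟩ := hu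
    obtain ⟨D, hD, hv1, hv2⟩ := hv
    obtain ⟨C₀, hC₀, rfl⟩ := Finset.mem_image.mp hC
    obtain ⟨D₀, hD₀, rfl⟩ := Finset.mem_image.mp hD
    obtain ⟨a₁, ha₁, rfl⟩ := Finset.mem_image.mp hu1
    obtain ⟨a₂, ha₂, rfl⟩ := Finset.mem_image.mp hu2
    obtain ⟨b₁, hb₁, rfl⟩ := Finset.mem_image.mp hv1
    obtain ⟨b₂, hb₂, rfl⟩ := Finset.mem_image.mp hv2
    have hcross := hPcross a₁ b₁ a₂ b₂
      ((chiRank_lt_comp _ (emb_strictMono V)).mpr h1)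
      ((chiRank_lt_comp _ (emb_strictMono V)).mpr h2)
      ((chiRank_lt_comp _ (emb_strictMono V)).mpr h3)
      ⟨C₀, hC₀, ha₁, ha₂⟩ ⟨D₀, hD₀, hb₁, hb₂⟩
    obtain ⟨E₀, hE₀, haE, hbE⟩ := hcross
    exact ⟨E₀.image (emb V), Finset.mem_image_of_mem _ hE₀,
      Finset.mem_image_of_mem _ haE, Finset.mem_image_of_mem _ hbE⟩

lemma pushforward_altWord {V : Finset (Fin p)} {χ : Fin p → Bool} {k : Fin p → K}
    {B : Finset (Fin V.card)} (hB : AltWord (χ ∘ emb V) (k ∘ emb V) B) :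
    AltWord χ k (B.image (emb V)) := by
  obtain ⟨hne, hk, halt, i₀, hi₀, j₀, hj₀, hbound, hneq⟩ := hB
  refine ⟨hne.image _, ?_, ?_, ?_⟩
  · intro i hi j hj
    obtain ⟨a, ha, rfl⟩ := Finset.mem_image.mp hi
    obtain ⟨b, hb, rfl⟩ := Finset.mem_image.mp hj
    exact hk a ha b hb
  · intro i hi j hj hij hgap
    obtain ⟨a, ha, rfl⟩ := Finset.mem_image.mp hi
    obtain ⟨b, hb, rfl⟩ := Finset.mem_image.mp hj
    refine halt a ha b hb ((emb_strictMono V).lt_iff_lt.mp hij) ?_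
    intro l hl ⟨h1, h2⟩
    exact hgap (emb V l) (Finset.mem_image_of_mem _ hl)
      ⟨(emb_strictMono V) h1, (emb_strictMono V) h2⟩
  · refine ⟨emb V i₀, Finset.mem_image_of_mem _ hi₀, emb V j₀,
      Finset.mem_image_of_mem _ hj₀, ?_, hneq⟩
    intro x hx
    obtain ⟨c, hc, rfl⟩ := Finset.mem_image.mp hx
    exact ⟨(emb_strictMono V).monotone (hbound c hc).1,
      (emb_strictMono V).monotone (hbound c hc).2⟩

/-! ### Gluing relative partitions inside the blocks of a bi-non-crossing partition -/

lemma glue_BNC {χ : Fin p → Bool} {σ : Finset (Finset (Fin p))} (hσ : σ ∈ BNC χ)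
    (g : Finset (Fin p) → Finset (Finset (Fin p)))
    (hg : ∀ V ∈ σ, RelPart χ V (g V)) :
    (σ.biUnion g) ∈ BNC χ ∧ Refines (σ.biUnion g) σ := by
  rw [mem_BNC_iff] at hσ
  obtain ⟨⟨hσne, hσcov⟩, hσcross⟩ := hσ
  have hmem : ∀ B, B ∈ σ.biUnion g ↔ ∃ V ∈ σ, B ∈ g V := fun B => Finset.mem_biUnion
  have href : Refines (σ.biUnion g) σ := by
    intro B hB
    obtain ⟨V, hV, hBV⟩ := (hmem B).mp hB
    exact ⟨V, hV, ((hg V hV).1 B hBV).2⟩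
  refine ⟨?_, href⟩
  rw [mem_BNC_iff]
  refine ⟨⟨?_, ?_⟩, ?_⟩
  · intro B hB
    obtain ⟨V, hV, hBV⟩ := (hmem B).mp hB
    exact ((hg V hV).1 B hBV).1
  · intro i
    obtain ⟨V, ⟨hV, hiV⟩, hVuniq⟩ := hσcov i
    obtain ⟨B, ⟨hB, hiB⟩, hBuniq⟩ := (hg V hV).2.1 i hiV
    refine ⟨B, ⟨(hmem B).mpr ⟨V, hV, hB⟩, hiB⟩, ?_⟩
    intro C ⟨hC, hiC⟩
    obtain ⟨W, hW, hCW⟩ := (hmem C).mp hC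
    have hiW : i ∈ W := ((hg W hW).1 C hCW).2 hiC
    have : W = V := hVuniq W ⟨hW, hiW⟩
    subst this
    exact hBuniq C ⟨hCW, hiC⟩
  · intro u₁ v₁ u₂ v₂ h1 h2 h3 hu hv
    obtain ⟨B, hB, hu1, hu2⟩ := hu
    obtain ⟨D, hD, hv1, hv2⟩ := hv
    obtain ⟨V, hV, hBV⟩ := (hmem B).mp hB
    obtain ⟨W, hW, hDW⟩ := (hmem D).mp hD
    by_cases hVW : V = W
    · subst hVW
      exact (hg V hV).2.2 u₁ v₁ u₂ v₂ h1 h2 h3 ⟨B, hBV, hu1, hu2⟩ ⟨D, hDW, hv1, hv2⟩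
        |>.imp (fun E hE => ⟨(hmem E).mpr ⟨V, hV, hE.1⟩, hE.2⟩)
    · exfalso
      have hBsub := ((hg V hV).1 B hBV).2
      have hDsub := ((hg W hW).1 D hDW).2
      have := hσcross u₁ v₁ u₂ v₂ h1 h2 h3 ⟨V, hV, hBsub hu1, hBsub hu2⟩
        ⟨W, hW, hDsub hv1, hDsub hv2⟩
      obtain ⟨E, hE, huE, hvE⟩ := this
      have hEW : E = W := block_eq_block ⟨hσne, hσcov⟩ hE hW hvE (hDsub hv1)
      have hEV : E = V := block_eq_block ⟨hσne, hσcov⟩ hE hV huE (hBsub hu1)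
      exact hVW (hEV ▸ hEW)

/-! ### Boolean bi-non-crossing partitions: the key combinatorial fact -/

lemma altChi_eq_true {n : ℕ} {i : Fin (2 * n)} : altChi n i = true ↔ (i : ℕ) % 2 = 0 := by
  simp [altChi]

lemma altChi_eq_false {n : ℕ} {i : Fin (2 * n)} : altChi n i = false ↔ (i : ℕ) % 2 = 1 := by
  rw [← Bool.not_eq_true, altChi_eq_true]
  omega

lemma claimC {n : ℕ} {K : Type*} {k : Fin (2 * n) → K} {ρ : Finset (Finset (Fin (2 * n)))}
    (hρ : ρ ∈ BNC (altChi n)) (halt : ∀ B ∈ ρ, AltWord (altChi n) k B) (m : Fin n) :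
    SameBlock ρ (dIdx m) (dIdx' m) := by
  rw [mem_BNC_iff] at hρ
  obtain ⟨hpart, hcross⟩ := hρ
  have main : ∀ d : ℕ, ∀ m : Fin n, n - 1 - (m : ℕ) = d → SameBlock ρ (dIdx m) (dIdx' m) := by
    intro d
    induction d using Nat.strong_induction_on with
    | _ d IH =>
      intro m hm
      have IH' : ∀ m' : Fin n, (m : ℕ) < (m' : ℕ) → SameBlock ρ (dIdx m') (dIdx' m') := by
        intro m' hmm'
        exact IH (n - 1 - (m' : ℕ)) (by have := m'.isLt; have := m.isLt; omega) m' rfl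
      by_contra hQ
      set L : Fin (2 * n) := dIdx m with hLdef
      set R : Fin (2 * n) := dIdx' m with hRdef
      have hLval : (L : ℕ) = 2 * (m : ℕ) := rfl
      have hRval : (R : ℕ) = 2 * (m : ℕ) + 1 := rfl
      have hχL : altChi n L = true := altChi_eq_true.mpr (by omega)
      have hχR : altChi n R = false := altChi_eq_false.mpr (by omega)
      obtain ⟨V, ⟨hV, hLV⟩, -⟩ := hpart.2 L
      obtain ⟨W, ⟨hW, hRW⟩, -⟩ := hpart.2 R
      have hRnV : R ∉ V := fun hx => hQ ⟨V, hV, hLV, hx⟩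
      have hLnW : L ∉ W := fun hx => hQ ⟨W, hW, hx, hRW⟩
      have hVW : V ≠ W := fun h => hQ ⟨V, hV, hLV, h ▸ hRW⟩
      by_cases hcase1 : ∃ x ∈ V, L < x
      · -- Case 1 : L has a successor in V
        set F := V.filter (fun x => L < x) with hF
        have hFne : F.Nonempty := by
          obtain ⟨x, hx1, hx2⟩ := hcase1
          exact ⟨x, by simp [hF, hx1, hx2]⟩
        set x₀ := F.min' hFne with hx₀
        have hx₀F : x₀ ∈ F := F.min'_mem hFne
        have hx₀V : x₀ ∈ V := (Finset.mem_filter.mp hx₀F).1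
        have hLx₀ : L < x₀ := (Finset.mem_filter.mp hx₀F).2
        have hx₀min : ∀ y ∈ V, L < y → x₀ ≤ y := by
          intro y hy hLy
          exact F.min'_le y (by simp [hF, hy, hLy])
        have hgap : ∀ l ∈ V, ¬(L < l ∧ l < x₀) := by
          intro l hl ⟨h1, h2⟩
          exact absurd (hx₀min l hl h1) (not_le_of_gt h2)
        have hχx₀ : altChi n L ≠ altChi n x₀ :=
          (halt V hV).2.2.1 L hLV x₀ hx₀V hLx₀ hgap
        have hx₀odd : (x₀ : ℕ) % 2 = 1 := by
          rcases Nat.mod_two_eq_zero_or_one (x₀ : ℕ) with h | h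
          · exact absurd (altChi_eq_true.mpr h) (fun hh => hχx₀ (hχL.trans hh.symm))
          · exact h
        have hx₀gt : 2 * (m : ℕ) < (x₀ : ℕ) := hLx₀
        by_cases hdm : (x₀ : ℕ) / 2 = (m : ℕ)
        · -- x₀ = R
          have : x₀ = R := Fin.ext (by omega)
          exact hRnV (this ▸ hx₀V)
        · have hdm' : (m : ℕ) < (x₀ : ℕ) / 2 := by omega
          have hdlt : (x₀ : ℕ) / 2 < n := by have := x₀.isLt; omega
          set m' : Fin n := ⟨(x₀ : ℕ) / 2, hdlt⟩ with hm'
          obtain ⟨E, hE, h1, h2⟩ := IH' m' hdm'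
          have hx₀eq : dIdx' m' = x₀ := Fin.ext (by simp [dIdx', hm']; omega)
          have hEV : E = V := block_eq_block hpart hE hV (hx₀eq ▸ h2) hx₀V
          have hmid : dIdx m' ∈ V := hEV ▸ h1
          have hlt1 : L < dIdx m' := by
            rw [Fin.lt_def]
            show (L : ℕ) < 2 * ((x₀ : ℕ) / 2)
            omega
          have hlt2 : dIdx m' < x₀ := by
            rw [Fin.lt_def]
            show 2 * ((x₀ : ℕ) / 2) < (x₀ : ℕ)
            omega
          exact hgap (dIdx m') hmid ⟨hlt1, hlt2⟩
      · -- Case 2 : L is the maximum of V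
        push_neg at hcase1
        obtain ⟨-, -, -, i₀, hi₀V, j₀, hj₀V, hbound, hneq⟩ := halt V hV
        have hj₀L : j₀ = L := le_antisymm (hcase1 j₀ hj₀V) (hbound L hLV).2
        have hχi₀ : altChi n i₀ = false := by
          rcases Bool.eq_false_or_eq_true (altChi n i₀) with h | h
          · exact absurd (h.trans ((hj₀L ▸ hχL : altChi n j₀ = true).symm)) hneq
          · exact h
        have hi₀odd : (i₀ : ℕ) % 2 = 1 := altChi_eq_false.mp hχi₀
        have hi₀lt : (i₀ : ℕ) < 2 * (m : ℕ) := by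
          have h1 : i₀ ≤ L := (hbound L hLV).1
          have h2 : (i₀ : ℕ) ≤ 2 * (m : ℕ) := h1
          omega
        by_cases hcase2a : ∃ y ∈ W, y < R
        · -- Case 2a
          set G := W.filter (fun y => y < R) with hG
          have hGne : G.Nonempty := by
            obtain ⟨y, hy1, hy2⟩ := hcase2a
            exact ⟨y, by simp [hG, hy1, hy2]⟩
          set y₀ := G.max' hGne with hy₀
          have hy₀G : y₀ ∈ G := G.max'_mem hGne
          have hy₀W : y₀ ∈ W := (Finset.mem_filter.mp hy₀G).1
          have hy₀R : y₀ < R := (Finset.mem_filter.mp hy₀G).2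
          have hy₀max : ∀ y ∈ W, y < R → y ≤ y₀ := by
            intro y hy hyR
            exact G.le_max' y (by simp [hG, hy, hyR])
          have hgap2 : ∀ l ∈ W, ¬(y₀ < l ∧ l < R) := by
            intro l hl ⟨h1, h2⟩
            exact absurd (hy₀max l hl h2) (not_le_of_gt h1)
          have hχy₀ : altChi n y₀ ≠ altChi n R :=
            (halt W hW).2.2.1 y₀ hy₀W R hRW hy₀R hgap2
          have hy₀even : (y₀ : ℕ) % 2 = 0 := by
            rcases Nat.mod_two_eq_zero_or_one (y₀ : ℕ) with h | h
            · exact h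
            · exact absurd (altChi_eq_false.mpr h) (fun hh => hχy₀ (hh.trans hχR.symm))
          by_cases hcm : (y₀ : ℕ) / 2 = (m : ℕ)
          · have : y₀ = L := Fin.ext (by have := hy₀R; rw [Fin.lt_def] at this; omega)
            exact hLnW (this ▸ hy₀W)
          · have hcm' : (y₀ : ℕ) < 2 * (m : ℕ) := by
              have := hy₀R
              rw [Fin.lt_def] at this
              omega
            have hr1 : chiRank (altChi n) y₀ < chiRank (altChi n) L :=
              (chiRank_lt_left_left (altChi_eq_true.mpr hy₀even) hχL).mpr
                (by rw [Fin.lt_def]; omega)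
            have hr2 : chiRank (altChi n) L < chiRank (altChi n) R :=
              chiRank_lt_left_right hχL hχR
            have hr3 : chiRank (altChi n) R < chiRank (altChi n) i₀ :=
              (chiRank_lt_right_right hχR hχi₀).mpr (by rw [Fin.lt_def]; omega)
            have := hcross y₀ L R i₀ hr1 hr2 hr3 ⟨W, hW, hy₀W, hRW⟩ ⟨V, hV, hLV, hi₀V⟩
            obtain ⟨E, hE, hyE, hLE⟩ := this
            have hEW : E = W := block_eq_block hpart hE hW hyE hy₀W
            have hEV : E = V := block_eq_block hpart hE hV hLE hLV
            exact hVW (hEV ▸ hEW)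
        · -- Case 2b : R is the minimum of W
          push_neg at hcase2a
          obtain ⟨-, -, -, i₁, hi₁W, j₁, hj₁W, hbound2, hneq2⟩ := halt W hW
          have hi₁R : i₁ = R := le_antisymm (hbound2 R hRW).1 (hcase2a i₁ hi₁W)
          have hχj₁ : altChi n j₁ = true := by
            rcases Bool.eq_false_or_eq_true (altChi n j₁) with h | h
            · exact h
            · exact absurd ((hi₁R ▸ hχR : altChi n i₁ = false).trans h.symm) hneq2
          have hj₁even : (j₁ : ℕ) % 2 = 0 := altChi_eq_true.mp hχj₁
          have hj₁gt : 2 * (m : ℕ) + 1 < (j₁ : ℕ) := by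
            have h1 : R ≤ j₁ := hcase2a j₁ hj₁W
            have h2 : (2 * (m : ℕ) + 1) ≤ (j₁ : ℕ) := h1
            omega
          have hc'lt : (j₁ : ℕ) / 2 < n := by have := j₁.isLt; omega
          set m' : Fin n := ⟨(j₁ : ℕ) / 2, hc'lt⟩ with hm'
          have hm'gt : (m : ℕ) < (m' : ℕ) := by simp [hm']; omega
          obtain ⟨E, hE, h1, h2⟩ := IH' m' hm'gt
          have hj₁eq : dIdx m' = j₁ := Fin.ext (by simp [dIdx, hm']; omega)
          have hEW : E = W := block_eq_block hpart hE hW (hj₁eq ▸ h1) hj₁W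
          have htop : dIdx' m' ∈ W := hEW ▸ h2
          have : dIdx' m' ≤ j₁ := (hbound2 _ htop).2
          rw [Fin.le_def] at this
          have : 2 * ((j₁ : ℕ) / 2) + 1 ≤ (j₁ : ℕ) := this
          omega
  exact main (n - 1 - (m : ℕ)) m rfl
section Algebra
variable {A : Type*} [Ring A]

lemma ofFn_prod_zero_adjacent : ∀ (q : ℕ) (Z : Fin q → A) (i : ℕ) (h : i + 1 < q),
    Z ⟨i, by omega⟩ * Z ⟨i + 1, h⟩ = 0 → (List.ofFn Z).prod = 0 := by
  intro q
  induction q with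
  | zero => intro Z i h; omega
  | succ q IH =>
    intro Z i h hzero
    rw [List.ofFn_succ, List.prod_cons]
    cases i with
    | zero =>
      obtain ⟨q, rfl⟩ : ∃ q', q = q' + 1 := ⟨q - 1, by omega⟩
      rw [List.ofFn_succ, List.prod_cons, ← mul_assoc]
      have h0 : Z 0 = Z ⟨0, by omega⟩ := rfl
      have h1 : Z (Fin.succ 0) = Z ⟨1, h⟩ := congrArg Z (Fin.ext (by simp))
      rw [h0, h1, hzero, zero_mul]
    | succ i =>
      rw [IH (fun j => Z j.succ) i (by omega) ?_, mul_zero]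
      have e1 : Z ((⟨i, by omega⟩ : Fin q).succ) = Z ⟨i + 1, by omega⟩ := rfl
      have e2 : Z ((⟨i + 1, by omega⟩ : Fin q).succ) = Z ⟨i + 2, by omega⟩ := rfl
      show Z ((⟨i, by omega⟩ : Fin q).succ) * Z ((⟨i + 1, by omega⟩ : Fin q).succ) = 0
      rw [e1, e2]
      exact hzero

lemma ofFn_prod_odd : ∀ (m q : ℕ) (hq : q = 2 * m + 1) (Z : Fin q → A),
    (List.ofFn Z).prod = Z ⟨0, by omega⟩ *
      (List.ofFn fun i : Fin m => Z ⟨2 * (i : ℕ) + 1, by omega⟩ *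
        Z ⟨2 * (i : ℕ) + 2, by omega⟩).prod := by
  intro m
  induction m with
  | zero =>
    intro q hq Z
    subst hq
    simp [List.ofFn_succ]
  | succ m IH =>
    intro q hq Z
    obtain ⟨q', rfl, hq'⟩ : ∃ q', q = q' + 1 + 1 ∧ q' = 2 * m + 1 := ⟨q - 2, by omega, by omega⟩
    rw [List.ofFn_succ, List.prod_cons, List.ofFn_succ, List.prod_cons]
    rw [IH q' hq' (fun j => Z j.succ.succ)]
    have hRHS : (List.ofFn fun i : Fin (m + 1) => Z ⟨2 * (i : ℕ) + 1, by omega⟩ *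
        Z ⟨2 * (i : ℕ) + 2, by omega⟩).prod
        = (Z ⟨1, by omega⟩ * Z ⟨2, by omega⟩) *
          (List.ofFn fun i : Fin m => Z ⟨2 * (i : ℕ) + 3, by omega⟩ *
            Z ⟨2 * (i : ℕ) + 4, by omega⟩).prod := by
      rw [List.ofFn_succ, List.prod_cons]
      congr 1
    rw [hRHS]
    have hlist : (List.ofFn fun j : Fin m =>
          Z (⟨2 * (j : ℕ) + 1, by omega⟩ : Fin q').succ.succ *
          Z (⟨2 * (j : ℕ) + 2, by omega⟩ : Fin q').succ.succ)
        = List.ofFn fun i : Fin m => Z ⟨2 * (i : ℕ) + 3, by omega⟩ *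
            Z ⟨2 * (i : ℕ) + 4, by omega⟩ := by
      apply congrArg
      funext j
      congr 1 <;> apply congrArg <;> apply Fin.ext <;> simp [Fin.val_succ] <;> omega
    rw [hlist]
    have e0 : Z (0 : Fin (q' + 1 + 1)) = Z ⟨0, by omega⟩ := rfl
    have e1 : Z ((0 : Fin (q' + 1)).succ) = Z ⟨1, by omega⟩ := rfl
    have e2 : Z ((⟨0, by omega⟩ : Fin q').succ.succ) = Z ⟨2, by omega⟩ := rfl
    rw [e0, e1, e2, ← mul_assoc, ← mul_assoc, ← mul_assoc]
    congr 1
    rw [mul_assoc]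
end Algebra

section Words
variable {A : Type*} [Ring A] [Algebra ℂ A] {K : Type*}
variable (φ : A →ₗ[ℂ] ℂ) (C' D' : K → Set A)

/-- Vanishing of alternating single-pair moments starting and ending on the same side. -/
lemma phi_alt_vanish
    (hC : ∀ k (m : ℕ) (x : Fin (m + 1) → A) (y : Fin m → A),
      (∀ i, x i ∈ C' k) → (∀ i, y i ∈ D' k) →
      φ (x 0 * (List.ofFn fun i : Fin m => y i * x i.succ).prod) = 0)
    (hD : ∀ k (m : ℕ) (y : Fin (m + 1) → A) (x : Fin m → A),
      (∀ i, y i ∈ D' k) → (∀ i, x i ∈ C' k) →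
      φ (y 0 * (List.ofFn fun i : Fin m => x i * y i.succ).prod) = 0)
    (k₀ : K) (m q : ℕ) (hq : q = 2 * m + 1) (Z : Fin q → A) (χ : Fin q → Bool)
    (htyp : ∀ i, (χ i = true → Z i ∈ C' k₀) ∧ (χ i = false → Z i ∈ D' k₀))
    (halt : ∀ (j : ℕ) (h : j + 1 < q), χ ⟨j + 1, h⟩ ≠ χ ⟨j, by omega⟩) :
    φ (List.ofFn Z).prod = 0 := by
  have hq0 : 0 < q := by omega
  have hpar : ∀ (j : ℕ) (h : j < q),
      χ ⟨j, h⟩ = if j % 2 = 0 then χ ⟨0, hq0⟩ else !(χ ⟨0, hq0⟩) := by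
    intro j
    induction j with
    | zero => intro h; simp
    | succ j IHj =>
      intro h
      have hne := halt j h
      rw [IHj (by omega)] at hne
      rcases Nat.mod_two_eq_zero_or_one j with hj | hj
      · rw [if_pos hj] at hne
        rw [if_neg (by omega)]
        rcases Bool.eq_false_or_eq_true (χ ⟨j + 1, h⟩) with hb | hb <;>
          rcases Bool.eq_false_or_eq_true (χ ⟨0, hq0⟩) with hb0 | hb0 <;>
            simp_all
      · rw [if_neg (by omega)] at hne
        rw [if_pos (by omega)]
        rcases Bool.eq_false_or_eq_true (χ ⟨j + 1, h⟩) with hb | hb <;>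
          rcases Bool.eq_false_or_eq_true (χ ⟨0, hq0⟩) with hb0 | hb0 <;>
            simp_all
  rw [ofFn_prod_odd m q hq Z]
  cases hχ0 : χ ⟨0, hq0⟩
  · -- starts (and ends) on the right
    have hy : ∀ i : Fin (m + 1), Z ⟨2 * (i : ℕ), by omega⟩ ∈ D' k₀ := by
      intro i
      refine (htyp _).2 ?_
      rw [hpar (2 * (i : ℕ)) (by omega), if_pos (by omega), hχ0]
    have hx : ∀ i : Fin m, Z ⟨2 * (i : ℕ) + 1, by omega⟩ ∈ C' k₀ := by
      intro i
      refine (htyp _).1 ?_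
      rw [hpar (2 * (i : ℕ) + 1) (by omega), if_neg (by omega), hχ0]
      rfl
    have := hD k₀ m (fun i : Fin (m + 1) => Z ⟨2 * (i : ℕ), by omega⟩)
      (fun i : Fin m => Z ⟨2 * (i : ℕ) + 1, by omega⟩) hy hx
    convert this using 3 <;>
      first
        | (apply congrArg; apply congrArg; funext i; congr 1)
        | (exact congrArg Z (Fin.ext (by rfl)))
  · -- starts (and ends) on the left
    have hx : ∀ i : Fin (m + 1), Z ⟨2 * (i : ℕ), by omega⟩ ∈ C' k₀ := by
      intro i
      refine (htyp _).1 ?_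
      rw [hpar (2 * (i : ℕ)) (by omega), if_pos (by omega), hχ0]
    have hy : ∀ i : Fin m, Z ⟨2 * (i : ℕ) + 1, by omega⟩ ∈ D' k₀ := by
      intro i
      refine (htyp _).2 ?_
      rw [hpar (2 * (i : ℕ) + 1) (by omega), if_neg (by omega), hχ0]
      rfl
    have := hC k₀ m (fun i : Fin (m + 1) => Z ⟨2 * (i : ℕ), by omega⟩)
      (fun i : Fin m => Z ⟨2 * (i : ℕ) + 1, by omega⟩) hx hy
    convert this using 3 <;>
      first
        | (apply congrArg; apply congrArg; funext i; congr 1)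
        | (exact congrArg Z (Fin.ext (by rfl)))

lemma phi_single_C
    (hC : ∀ k (m : ℕ) (x : Fin (m + 1) → A) (y : Fin m → A),
      (∀ i, x i ∈ C' k) → (∀ i, y i ∈ D' k) →
      φ (x 0 * (List.ofFn fun i : Fin m => y i * x i.succ).prod) = 0)
    {k₀ : K} {x : A} (hx : x ∈ C' k₀) : φ x = 0 := by
  have := hC k₀ 0 (fun _ => x) (fun i => i.elim0) (fun _ => hx) (fun i => i.elim0)
  simpa using this

lemma phi_single_D
    (hD : ∀ k (m : ℕ) (y : Fin (m + 1) → A) (x : Fin m → A),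
      (∀ i, y i ∈ D' k) → (∀ i, x i ∈ C' k) →
      φ (y 0 * (List.ofFn fun i : Fin m => x i * y i.succ).prod) = 0)
    {k₀ : K} {y : A} (hy : y ∈ D' k₀) : φ y = 0 := by
  have := hD k₀ 0 (fun _ => y) (fun i => i.elim0) (fun _ => hy) (fun i => i.elim0)
  simpa using this
end Words

lemma chi_parity {q : ℕ} (χ : Fin q → Bool) (hq0 : 0 < q)
    (halt : ∀ (j : ℕ) (h : j + 1 < q), χ ⟨j + 1, h⟩ ≠ χ ⟨j, by omega⟩) :
    ∀ (j : ℕ) (h : j < q),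
      χ ⟨j, h⟩ = if j % 2 = 0 then χ ⟨0, hq0⟩ else !(χ ⟨0, hq0⟩) := by
  intro j
  induction j with
  | zero => intro h; simp
  | succ j IHj =>
    intro h
    have hne := halt j h
    rw [IHj (by omega)] at hne
    rcases Nat.mod_two_eq_zero_or_one j with hj | hj
    · rw [if_pos hj] at hne
      rw [if_neg (by omega)]
      rcases Bool.eq_false_or_eq_true (χ ⟨j + 1, h⟩) with hb | hb <;>
        rcases Bool.eq_false_or_eq_true (χ ⟨0, hq0⟩) with hb0 | hb0 <;>
          simp_all
    · rw [if_neg (by omega)] at hne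
      rw [if_pos (by omega)]
      rcases Bool.eq_false_or_eq_true (χ ⟨j + 1, h⟩) with hb | hb <;>
        rcases Bool.eq_false_or_eq_true (χ ⟨0, hq0⟩) with hb0 | hb0 <;>
          simp_all

/-! ### Möbius function glue -/

lemma filter_refines_onePart (χ : Fin p → Bool) :
    ((BNC χ).filter fun σ => Refines σ (onePart p)) = BNC χ :=
  Finset.filter_true_of_mem (fun σ _ => refines_onePart σ)

lemma mu_onePart_onePart {χ : Fin p → Bool}
    {μp : Finset (Finset (Fin p)) → Finset (Finset (Fin p)) → ℂ}
    (hμp : IsMoebius χ μp) (hp : 0 < p) : μp (onePart p) (onePart p) = 1 := by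
  have h := hμp.2.1 (onePart p) (onePart p) (onePart_mem_BNC hp χ) (onePart_mem_BNC hp χ)
    (refines_refl _)
  rw [if_pos rfl] at h
  have hfilter : ((BNC χ).filter fun t => Refines (onePart p) t ∧ Refines t (onePart p))
      = {onePart p} := by
    apply Finset.ext
    intro t
    rw [Finset.mem_filter, Finset.mem_singleton]
    constructor
    · rintro ⟨ht, h1, -⟩
      exact eq_onePart_of_onePart_refines (mem_BNC_iff.mp ht).1 h1 hp
    · intro ht
      subst ht
      exact ⟨onePart_mem_BNC hp χ, refines_refl _, refines_refl _⟩
  rw [hfilter, Finset.sum_singleton] at h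
  exact h

/-! ### The vanishing lemma for non-admissible words -/

def Good {p : ℕ} {K : Type*} (χ : Fin p → Bool) (k : Fin p → K) : Prop :=
  ∃ P ∈ BNC χ, ∀ B ∈ P, AltWord χ k B

lemma empty_mem_BNC (χ : Fin 0 → Bool) : (∅ : Finset (Finset (Fin 0))) ∈ BNC χ := by
  rw [mem_BNC_iff]
  exact ⟨⟨fun V h => absurd h (Finset.notMem_empty V), fun i => i.elim0⟩,
    fun u₁ _ _ _ _ _ _ _ _ => u₁.elim0⟩

lemma phiPart_onePart {p : ℕ} {A : Type*} [Ring A] [Algebra ℂ A] (φ : A →ₗ[ℂ] ℂ)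
    (Z : Fin p → A) : phiPart φ Z (onePart p) = φ (List.ofFn Z).prod := by
  unfold phiPart onePart
  rw [Finset.prod_singleton, Fin.sort_univ, ← List.ofFn_eq_map]

section MainLemma
variable {A : Type*} [Ring A] [Algebra ℂ A] {K : Type*}

lemma lemmaG (φ : A →ₗ[ℂ] ℂ) (μ : MoebiusFamily)
    (hμ : ∀ (n : ℕ) (χ : Fin n → Bool), IsMoebius χ (μ n χ))
    (C D : K → Subalgebra ℂ A)
    (hfree : BiFreeFamily φ μ (fun k => (C k : Set A)) (fun k => (D k : Set A)))
    (C' D' : K → Set A)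
    (hCC : ∀ k, C' k ⊆ (C k : Set A)) (hDD : ∀ k, D' k ⊆ (D k : Set A))
    (hC0 : ∀ k, ∀ x ∈ C' k, ∀ y ∈ C' k, x * y = 0)
    (hD0 : ∀ k, ∀ x ∈ D' k, ∀ y ∈ D' k, x * y = 0)
    (hCmom : ∀ k (m : ℕ) (x : Fin (m + 1) → A) (y : Fin m → A),
      (∀ i, x i ∈ C' k) → (∀ i, y i ∈ D' k) →
      φ (x 0 * (List.ofFn fun i : Fin m => y i * x i.succ).prod) = 0)
    (hDmom : ∀ k (m : ℕ) (y : Fin (m + 1) → A) (x : Fin m → A),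
      (∀ i, y i ∈ D' k) → (∀ i, x i ∈ C' k) →
      φ (y 0 * (List.ofFn fun i : Fin m => x i * y i.succ).prod) = 0) :
    ∀ (p : ℕ) (Z : Fin p → A) (χ : Fin p → Bool) (k : Fin p → K),
      (∀ i, (χ i = true → Z i ∈ C' (k i)) ∧ (χ i = false → Z i ∈ D' (k i))) →
      ¬ Good χ k → φ (List.ofFn Z).prod = 0 := by
  intro p
  induction p using Nat.strong_induction_on with
  | _ p IH =>
    intro Z χ k htyp hnotGood
    rcases Nat.eq_zero_or_pos p with rfl | hp
    · exact absurd ⟨∅, empty_mem_BNC χ, fun B hB => absurd hB (Finset.notMem_empty B)⟩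
        hnotGood
    by_cases hkconst : ∀ i j : Fin p, k i = k j
    · -- all labels equal
      by_cases hadj : ∃ (j : ℕ) (h : j + 1 < p), χ ⟨j + 1, h⟩ = χ ⟨j, by omega⟩
      · -- two adjacent letters of the same type : the product vanishes
        obtain ⟨j, h, heq⟩ := hadj
        have hzero : Z ⟨j, by omega⟩ * Z ⟨j + 1, h⟩ = 0 := by
          cases hb : χ ⟨j, (by omega : j < p)⟩
          · have hb' : χ ⟨j + 1, h⟩ = false := heq.trans hb
            exact hD0 (k ⟨0, hp⟩) _ (hkconst ⟨j, by omega⟩ ⟨0, hp⟩ ▸ (htyp _).2 hb) _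
              (hkconst ⟨j + 1, h⟩ ⟨0, hp⟩ ▸ (htyp _).2 hb')
          · have hb' : χ ⟨j + 1, h⟩ = true := heq.trans hb
            exact hC0 (k ⟨0, hp⟩) _ (hkconst ⟨j, by omega⟩ ⟨0, hp⟩ ▸ (htyp _).1 hb) _
              (hkconst ⟨j + 1, h⟩ ⟨0, hp⟩ ▸ (htyp _).1 hb')
        rw [ofFn_prod_zero_adjacent p Z j h hzero, map_zero]
      · -- the word is strictly alternating
        push_neg at hadj
        rcases Nat.even_or_odd p with hpe | hpo
        · -- even length : the word is admissible, contradiction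
          exfalso
          apply hnotGood
          refine ⟨onePart p, onePart_mem_BNC hp χ, ?_⟩
          intro B hB
          rw [onePart, Finset.mem_singleton] at hB
          subst hB
          have hp2 : 2 ≤ p := by
            rcases hpe with ⟨t, ht⟩
            omega
          refine ⟨⟨⟨0, hp⟩, Finset.mem_univ _⟩, fun i _ j _ => (hkconst i j), ?_, ?_⟩
          · intro i _ j _ hij hgapf
            have hcons : (j : ℕ) = (i : ℕ) + 1 := by
              by_contra hc
              have h1 : (i : ℕ) + 1 < (j : ℕ) := by
                rw [Fin.lt_def] at hij
                omega
              exact hgapf ⟨(i : ℕ) + 1, by omega⟩ (Finset.mem_univ _)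
                ⟨by rw [Fin.lt_def]; simp, by rw [Fin.lt_def]; simpa using h1⟩
            have := hadj (i : ℕ) (by omega)
            have hi' : (⟨(i : ℕ), by omega⟩ : Fin p) = i := Fin.ext rfl
            have hj' : (⟨(i : ℕ) + 1, by omega⟩ : Fin p) = j := by
              apply Fin.ext
              simp only [Fin.val_mk]
              omega
            rw [hi', hj'] at this
            exact this.symm
          · refine ⟨⟨0, hp⟩, Finset.mem_univ _, ⟨p - 1, by omega⟩, Finset.mem_univ _, ?_, ?_⟩
            · intro x _
              constructor <;> rw [Fin.le_def] <;> simp <;> omega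
            · rw [chi_parity χ hp hadj (p - 1) (by omega), if_neg (by rcases hpe with ⟨t, ht⟩; omega)]
              cases χ ⟨0, hp⟩ <;> simp
        · -- odd length : conditions (2)/(3) apply
          obtain ⟨m, hm⟩ := hpo
          have htyp' : ∀ i, (χ i = true → Z i ∈ C' (k ⟨0, hp⟩)) ∧ (χ i = false → Z i ∈ D' (k ⟨0, hp⟩)) := by
            intro i
            exact ⟨fun h => hkconst i ⟨0, hp⟩ ▸ (htyp i).1 h,
              fun h => hkconst i ⟨0, hp⟩ ▸ (htyp i).2 h⟩
          exact phi_alt_vanish φ C' D' hCmom hDmom (k ⟨0, hp⟩) m p hm Z χ htyp' hadj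
    · -- the labels are not constant : use bi-freeness and induction
      push_neg at hkconst
      obtain ⟨i₀, j₀, hij₀⟩ := hkconst
      have hp2 : 2 ≤ p := by
        by_contra hlt
        push_neg at hlt
        have h1 := i₀.isLt
        have h2 := j₀.isLt
        have : i₀ = j₀ := Fin.ext (by omega)
        exact hij₀ (this ▸ rfl)
      have htypCD : ∀ i, (χ i = true → Z i ∈ (C (k i) : Set A)) ∧
          (χ i = false → Z i ∈ (D (k i) : Set A)) := by
        intro i
        exact ⟨fun h => hCC (k i) ((htyp i).1 h), fun h => hDD (k i) ((htyp i).2 h)⟩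
      have hcum := hfree p hp2 χ k ⟨i₀, j₀, hij₀⟩ Z htypCD
      unfold cumulant at hcum
      rw [filter_refines_onePart] at hcum
      have hvanish : ∀ σ ∈ BNC χ, σ ≠ onePart p → phiPart φ Z σ = 0 := by
        intro σ hσ hne'
        by_cases hall : ∀ V ∈ σ, Good (fun j => χ (emb V j)) (fun j => k (emb V j))
        · exfalso
          apply hnotGood
          have hex : ∀ V, ∃ ρ, V ∈ σ →
              (RelPart χ V ρ ∧ ∀ B ∈ ρ, AltWord χ k B) := by
            intro V
            by_cases hV : V ∈ σ
            · obtain ⟨P, hP, hPblocks⟩ := hall V hV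
              refine ⟨P.image (fun B => B.image (emb V)), fun _ =>
                ⟨pushforward_relPart hP, ?_⟩⟩
              intro B hB
              obtain ⟨B₀, hB₀, rfl⟩ := Finset.mem_image.mp hB
              exact pushforward_altWord (hPblocks B₀ hB₀)
            · exact ⟨∅, fun h => absurd h hV⟩
          choose g hg using hex
          have hglue := glue_BNC hσ g (fun V hV => (hg V hV).1)
          refine ⟨σ.biUnion g, hglue.1, ?_⟩
          intro B hB
          obtain ⟨V, hV, hBV⟩ := Finset.mem_biUnion.mp hB
          exact (hg V hV).2 B hBV
        · push_neg at hall
          obtain ⟨V, hV, hVnotGood⟩ := hall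
          unfold phiPart
          apply Finset.prod_eq_zero hV
          rw [sort_map_emb]
          exact IH V.card (block_card_lt (mem_BNC_iff.mp hσ).1 hne' hV)
            (fun j => Z (emb V j)) (fun j => χ (emb V j)) (fun j => k (emb V j))
            (fun j => htyp (emb V j)) hVnotGood
      have hsingle : (∑ σ ∈ BNC χ, phiPart φ Z σ * μ p χ σ (onePart p))
          = phiPart φ Z (onePart p) * μ p χ (onePart p) (onePart p) := by
        apply Finset.sum_eq_single
        · intro σ hσ hne'
          rw [hvanish σ hσ hne', zero_mul]
        · intro h
          exact absurd (onePart_mem_BNC hp χ) h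
      rw [hsingle, mu_onePart_onePart (hμ p χ) hp, mul_one, phiPart_onePart] at hcum
      exact hcum
end MainLemma
end BiFreeNL

set_option maxHeartbeats 2000000 in
open BiFreeNL in
/-- **Boolean moment and cumulant formulae, scalar case.** -/
theorem boolean_moment_cumulant_formulae
    {A : Type*} [Ring A] [Algebra ℂ A] {K : Type*}
    (φ : A →ₗ[ℂ] ℂ) (hφ : φ 1 = 1)
    (μ : MoebiusFamily) (hμ : ∀ (n : ℕ) (χ : Fin n → Bool), IsMoebius χ (μ n χ))
    (C' D' : K → Set A) (hsys : BiFreeBooleanSystem φ μ C' D')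
    (n : ℕ) (hn : 1 ≤ n)
    (ε : Fin (2 * n) → K) (hε : ∀ m : Fin n, ε (dIdx m) = ε (dIdx' m))
    (T S : Fin n → A)
    (hT : ∀ m : Fin n, T m ∈ C' (ε (dIdx m)))
    (hS : ∀ m : Fin n, S m ∈ D' (ε (dIdx' m))) :
    (φ (List.ofFn (interleave T S)).prod
        = ∑ π ∈ BNCb n, cumulant φ (altChi n) (μ (2 * n) (altChi n)) π (interleave T S))
    ∧ (cumulant φ (altChi n) (μ (2 * n) (altChi n)) (onePart (2 * n)) (interleave T S)
        = ∑ π ∈ BNCb n,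
            phiPart φ (interleave T S) π * μ (2 * n) (altChi n) π (onePart (2 * n)))
    ∧ ((∃ i j, ε i ≠ ε j) →
        cumulant φ (altChi n) (μ (2 * n) (altChi n)) (onePart (2 * n))
          (interleave T S) = 0) := by
  classical
  obtain ⟨C, D, hfree, hCC, hDD, -, hC0, hD0, hCmom, hDmom⟩ := hsys
  set Z := interleave T S with hZ
  have hp : 0 < 2 * n := by omega
  -- typing of the interleaved word
  have htyp : ∀ i : Fin (2 * n), (altChi n i = true → Z i ∈ C' (ε i)) ∧
      (altChi n i = false → Z i ∈ D' (ε i)) := by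
    intro i
    constructor
    · intro h
      have h0 : (i : ℕ) % 2 = 0 := altChi_eq_true.mp h
      have hidx : dIdx (⟨(i : ℕ) / 2, by have := i.isLt; omega⟩ : Fin n) = i := by
        apply Fin.ext
        show 2 * ((i : ℕ) / 2) = (i : ℕ)
        omega
      have hmem := hT ⟨(i : ℕ) / 2, by have := i.isLt; omega⟩
      rw [hidx] at hmem
      show (if (i : ℕ) % 2 = 0 then T ⟨(i : ℕ) / 2, by have := i.isLt; omega⟩
        else S ⟨(i : ℕ) / 2, by have := i.isLt; omega⟩) ∈ C' (ε i)
      rw [if_pos h0]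
      exact hmem
    · intro h
      have h0 : (i : ℕ) % 2 = 1 := altChi_eq_false.mp h
      have hidx : dIdx' (⟨(i : ℕ) / 2, by have := i.isLt; omega⟩ : Fin n) = i := by
        apply Fin.ext
        show 2 * ((i : ℕ) / 2) + 1 = (i : ℕ)
        omega
      have hmem := hS ⟨(i : ℕ) / 2, by have := i.isLt; omega⟩
      rw [hidx] at hmem
      show (if (i : ℕ) % 2 = 0 then T ⟨(i : ℕ) / 2, by have := i.isLt; omega⟩
        else S ⟨(i : ℕ) / 2, by have := i.isLt; omega⟩) ∈ D' (ε i)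
      rw [if_neg (by omega)]
      exact hmem
  have htypCD : ∀ i : Fin (2 * n), (altChi n i = true → Z i ∈ (C (ε i) : Set A)) ∧
      (altChi n i = false → Z i ∈ (D (ε i) : Set A)) := by
    intro i
    exact ⟨fun h => hCC (ε i) ((htyp i).1 h), fun h => hDD (ε i) ((htyp i).2 h)⟩
  -- part (iii)
  have hiii : (∃ i j, ε i ≠ ε j) →
      cumulant φ (altChi n) (μ (2 * n) (altChi n)) (onePart (2 * n)) Z = 0 := by
    intro hne
    exact hfree (2 * n) (by omega) (altChi n) ε hne Z htypCD
  -- the master vanishing lemma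
  have hM : ∀ σ ∈ BNC (altChi n), σ ∉ BNCb n → phiPart φ Z σ = 0 := by
    intro σ hσ hσb
    by_cases hall : ∀ V ∈ σ, Good (fun j => altChi n (emb V j)) (fun j => ε (emb V j))
    · exfalso
      apply hσb
      have hex : ∀ V, ∃ ρ, V ∈ σ →
          (RelPart (altChi n) V ρ ∧ ∀ B ∈ ρ, AltWord (altChi n) ε B) := by
        intro V
        by_cases hV : V ∈ σ
        · obtain ⟨P, hP, hPblocks⟩ := hall V hV
          refine ⟨P.image (fun B => B.image (emb V)), fun _ =>
            ⟨pushforward_relPart (V := V) (χ := altChi n) (P := P) hP, ?_⟩⟩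
          intro B hB
          obtain ⟨B₀, hB₀, rfl⟩ := Finset.mem_image.mp hB
          exact pushforward_altWord (hPblocks B₀ hB₀)
        · exact ⟨∅, fun h => absurd h hV⟩
      choose g hg using hex
      have hglue := glue_BNC hσ g (fun V hV => (hg V hV).1)
      have hblocks : ∀ B ∈ σ.biUnion g, AltWord (altChi n) ε B := by
        intro B hB
        obtain ⟨V, hV, hBV⟩ := Finset.mem_biUnion.mp hB
        exact (hg V hV).2 B hBV
      rw [BNCb, Finset.mem_filter]
      refine ⟨hσ, fun m => sameBlock_of_refines (claimC hglue.1 hblocks m) hglue.2⟩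
    · push_neg at hall
      obtain ⟨V, hV, hVnotGood⟩ := hall
      unfold phiPart
      apply Finset.prod_eq_zero hV
      rw [sort_map_emb]
      exact lemmaG φ μ hμ C D hfree C' D' hCC hDD hC0 hD0 hCmom hDmom V.card
        (fun j => Z (emb V j)) (fun j => altChi n (emb V j)) (fun j => ε (emb V j))
        (fun j => htyp (emb V j)) hVnotGood
  have hBNCbsub : BNCb n ⊆ BNC (altChi n) := Finset.filter_subset _ _
  -- part (ii)
  have hii : cumulant φ (altChi n) (μ (2 * n) (altChi n)) (onePart (2 * n)) Z
      = ∑ π ∈ BNCb n, phiPart φ Z π * μ (2 * n) (altChi n) π (onePart (2 * n)) := by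
    unfold cumulant
    rw [filter_refines_onePart]
    refine (Finset.sum_subset hBNCbsub ?_).symm
    intro σ hσ hσb
    rw [hM σ hσ hσb, zero_mul]
  -- Möbius inversion : the sum of all cumulants is the full moment
  have hkey : ∀ σ ∈ BNC (altChi n),
      (∑ π ∈ (BNC (altChi n)).filter (fun π => Refines σ π), μ (2 * n) (altChi n) σ π)
        = if σ = onePart (2 * n) then 1 else 0 := by
    intro σ hσ
    have h := (hμ (2 * n) (altChi n)).2.2 σ (onePart (2 * n)) hσ
      (onePart_mem_BNC hp _) (refines_onePart σ)
    rw [← h]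
    apply Finset.sum_congr ?_ (fun _ _ => rfl)
    apply Finset.filter_congr
    intro t _
    simp [refines_onePart t]
  have hswap : ∑ π ∈ BNC (altChi n), cumulant φ (altChi n) (μ (2 * n) (altChi n)) π Z
      = ∑ σ ∈ BNC (altChi n), phiPart φ Z σ *
          (∑ π ∈ (BNC (altChi n)).filter (fun π => Refines σ π), μ (2 * n) (altChi n) σ π) := by
    unfold cumulant
    calc ∑ π ∈ BNC (altChi n), ∑ σ ∈ (BNC (altChi n)).filter (fun σ => Refines σ π),
            phiPart φ Z σ * μ (2 * n) (altChi n) σ π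
        = ∑ π ∈ BNC (altChi n), ∑ σ ∈ BNC (altChi n),
            if Refines σ π then phiPart φ Z σ * μ (2 * n) (altChi n) σ π else 0 :=
          Finset.sum_congr rfl (fun π _ => Finset.sum_filter _ _)
      _ = ∑ σ ∈ BNC (altChi n), ∑ π ∈ BNC (altChi n),
            if Refines σ π then phiPart φ Z σ * μ (2 * n) (altChi n) σ π else 0 :=
          Finset.sum_comm
      _ = ∑ σ ∈ BNC (altChi n), ∑ π ∈ (BNC (altChi n)).filter (fun π => Refines σ π),
            phiPart φ Z σ * μ (2 * n) (altChi n) σ π :=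
          Finset.sum_congr rfl (fun σ _ => (Finset.sum_filter _ _).symm)
      _ = ∑ σ ∈ BNC (altChi n), phiPart φ Z σ *
            (∑ π ∈ (BNC (altChi n)).filter (fun π => Refines σ π), μ (2 * n) (altChi n) σ π) :=
          Finset.sum_congr rfl (fun σ _ => (Finset.mul_sum _ _ _).symm)
  have hmoment : ∑ π ∈ BNC (altChi n), cumulant φ (altChi n) (μ (2 * n) (altChi n)) π Z
      = φ (List.ofFn Z).prod := by
    rw [hswap, Finset.sum_congr rfl (fun σ hσ => by rw [hkey σ hσ])]
    rw [Finset.sum_eq_single (onePart (2 * n))]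
    · rw [if_pos rfl, mul_one, phiPart_onePart]
    · intro σ _ hne
      rw [if_neg hne, mul_zero]
    · intro h
      exact absurd (onePart_mem_BNC hp _) h
  -- cumulants of non-Boolean partitions vanish
  have hκ : ∀ π ∈ BNC (altChi n), π ∉ BNCb n →
      cumulant φ (altChi n) (μ (2 * n) (altChi n)) π Z = 0 := by
    intro π hπ hπb
    unfold cumulant
    apply Finset.sum_eq_zero
    intro σ hσ
    rw [Finset.mem_filter] at hσ
    have hσnb : σ ∉ BNCb n := by
      intro hσb
      apply hπb
      rw [BNCb, Finset.mem_filter] at hσb ⊢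
      exact ⟨hπ, fun m => sameBlock_of_refines (hσb.2 m) hσ.2⟩
    rw [hM σ hσ.1 hσnb, zero_mul]
  have hi : φ (List.ofFn Z).prod
      = ∑ π ∈ BNCb n, cumulant φ (altChi n) (μ (2 * n) (altChi n)) π Z := by
    rw [← hmoment]
    refine (Finset.sum_subset hBNCbsub ?_).symm
    intro π hπ hπb
    exact hκ π hπ hπb
  exact ⟨hi, hii, hiii⟩
end

section
/- (Möbius inversion within Boolean bi-non-crossing partitions.) Let χ : {1,…,2n} → {ℓ,r} be alternating. Then for all π, σ ∈ BNC_b(χ) with π ≤ σ, one has Σ_{τ ∈ BNC_b(χ), π ≤ τ ≤ σ} μ_BNC(τ, σ) = Σ_{τ ∈ BNC_b(χ), π ≤ τ ≤ σ} μ_BNC(π, τ) = 1 if π = σ and 0 otherwise, where μ_BNC is the Möbius function of the full lattice BNC(χ). -/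
open Finset

open BiFreeNL
open scoped Classical in
/-- **Möbius inversion within Boolean bi-non-crossing partitions.** -/
theorem moebius_inversion_in_BNCb
    (n : ℕ)
    (μ : Finset (Finset (Fin (2 * n))) → Finset (Finset (Fin (2 * n))) → ℂ)
    (hμ : IsMoebius (altChi n) μ)
    (π σ : Finset (Finset (Fin (2 * n))))
    (hπ : π ∈ BNCb n) (hσ : σ ∈ BNCb n) (hle : Refines π σ) :
    ((∑ τ ∈ (BNCb n).filter fun τ => Refines π τ ∧ Refines τ σ, μ τ σ)
        = if π = σ then 1 else 0)
    ∧ ((∑ τ ∈ (BNCb n).filter fun τ => Refines π τ ∧ Refines τ σ, μ π τ)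
        = if π = σ then 1 else 0) := by
  have hπBNC : π ∈ BNC (altChi n) := (Finset.mem_filter.mp hπ).1
  have hπb : ∀ m : Fin n, SameBlock π (dIdx m) (dIdx' m) := (Finset.mem_filter.mp hπ).2
  have hσBNC : σ ∈ BNC (altChi n) := (Finset.mem_filter.mp hσ).1
  have hset : ((BNCb n).filter fun τ => Refines π τ ∧ Refines τ σ)
      = (BNC (altChi n)).filter fun τ => Refines π τ ∧ Refines τ σ := by
    ext τ
    simp only [Finset.mem_filter, BNCb, and_assoc]
    constructor
    · rintro ⟨h1, _, h3⟩; exact ⟨h1, h3⟩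
    · rintro ⟨h1, h2, h3⟩
      refine ⟨h1, fun m => ?_, h2, h3⟩
      obtain ⟨V, hV, hi, hj⟩ := hπb m
      obtain ⟨W, hW, hVW⟩ := h2 V hV
      exact ⟨W, hW, hVW hi, hVW hj⟩
  rw [hset]
  exact ⟨hμ.2.1 π σ hπBNC hσBNC hle, hμ.2.2 π σ hπBNC hσBNC hle⟩
end

section
/- (Vanishing of non-Boolean moment terms in a bi-free Boolean system, scalar case.) Let (A, φ) be a non-commutative probability space and let {(C'_k, D'_k)}_{k∈K} be a bi-free Boolean system with respect to φ. Let χ : {1,…,2n} → {ℓ,r} be alternating and let ε : {1,…,2n} → K satisfy ε(2m−1) = ε(2m) for all m ∈ {1,…,n}. Let T_m ∈ C'_{ε(2m−1)} and S_m ∈ D'_{ε(2m)} for m ∈ {1,…,n}. If π ∈ BNC(χ) refines the partition of {1,…,2n} induced by ε (i.e. π ≤ ε), then φ_π(T_1, S_1, T_2, S_2, …, T_n, S_n) = 0 unless π ∈ BNC_b(χ). -/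
open Finset

section Helpers
open BiFreeNL Finset
open scoped Classical

lemma card_even_lt (n a : ℕ) (_ha : a ≤ n) :
    ((Finset.range (2*n)).filter fun j => j % 2 = 0 ∧ j < 2*a).card = a := by
  have h : ((Finset.range (2*n)).filter fun j => j % 2 = 0 ∧ j < 2*a)
      = (Finset.range a).image (fun t => 2*t) := by
    ext j
    simp only [Finset.mem_filter, Finset.mem_range, Finset.mem_image]
    constructor
    · rintro ⟨h1, h2, h3⟩; exact ⟨j/2, by omega, by omega⟩
    · rintro ⟨t, ht, rfl⟩; omega
  rw [h, Finset.card_image_of_injective _ (fun x y h => by omega), Finset.card_range]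

lemma card_odd_gt (n a : ℕ) (_ha : a < n) :
    ((Finset.range (2*n)).filter fun j => j % 2 = 1 ∧ 2*a+1 < j).card = n - 1 - a := by
  have h : ((Finset.range (2*n)).filter fun j => j % 2 = 1 ∧ 2*a+1 < j)
      = (Finset.range (n-1-a)).image (fun t => 2*(a+1+t)+1) := by
    ext j
    simp only [Finset.mem_filter, Finset.mem_range, Finset.mem_image]
    constructor
    · rintro ⟨h1, h2, h3⟩; exact ⟨(j-1)/2 - a - 1, by omega, by omega⟩
    · rintro ⟨t, ht, rfl⟩; omega
  rw [h, Finset.card_image_of_injective _ (fun x y h => by omega), Finset.card_range]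

lemma card_filter_fin (N : ℕ) (P : Fin N → Prop) [DecidablePred P] :
    ((Finset.univ : Finset (Fin N)).filter P).card
      = ((Finset.range N).filter (fun x => ∀ h : x < N, P ⟨x, h⟩)).card := by
  classical
  rw [← Finset.card_image_of_injective ((Finset.univ : Finset (Fin N)).filter P)
    Fin.val_injective]
  congr 1
  ext x
  simp only [Finset.mem_image, Finset.mem_filter, Finset.mem_range, Finset.mem_univ, true_and]
  constructor
  · rintro ⟨j, hj, rfl⟩; exact ⟨j.isLt, fun h => hj⟩
  · rintro ⟨hx, hP⟩; exact ⟨⟨x, hx⟩, hP hx, rfl⟩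

lemma chiRank_even {n : ℕ} (i : Fin (2*n)) (h : (i:ℕ) % 2 = 0) :
    chiRank (altChi n) i = (i:ℕ)/2 := by
  have hc : altChi n i = true := by simp [altChi, h]
  rw [chiRank, if_pos hc, card_filter_fin]
  have hset : ((Finset.range (2*n)).filter
        (fun x => ∀ hx : x < 2*n, altChi n ⟨x, hx⟩ = true ∧ (⟨x, hx⟩ : Fin (2*n)) < i))
      = ((Finset.range (2*n)).filter fun j => j % 2 = 0 ∧ j < 2*((i:ℕ)/2)) := by
    apply Finset.filter_congr
    intro x hx
    simp only [Finset.mem_range] at hx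
    constructor
    · intro hall
      obtain ⟨h1, h2⟩ := hall hx
      simp only [altChi, decide_eq_true_eq] at h1
      rw [Fin.lt_def] at h2
      simp only [Fin.val_mk] at h2
      exact ⟨h1, by omega⟩
    · rintro ⟨h1, h2⟩ hx'
      refine ⟨by simp [altChi, h1], ?_⟩
      rw [Fin.lt_def]
      simp only [Fin.val_mk]
      omega
  rw [hset, card_even_lt n _ (by omega)]

lemma chiRank_odd {n : ℕ} (i : Fin (2*n)) (h : (i:ℕ) % 2 = 1) :
    chiRank (altChi n) i = 2*n - 1 - (i:ℕ)/2 := by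
  have hc : ¬ altChi n i = true := by simp [altChi, h]
  rw [chiRank, if_neg hc, card_filter_fin, card_filter_fin]
  have hset1 : ((Finset.range (2*n)).filter
        (fun x => ∀ hx : x < 2*n, altChi n ⟨x, hx⟩ = true))
      = ((Finset.range (2*n)).filter fun j => j % 2 = 0 ∧ j < 2*n) := by
    apply Finset.filter_congr
    intro x hx
    simp only [Finset.mem_range] at hx
    constructor
    · intro hall
      have h1 := hall hx
      simp only [altChi, decide_eq_true_eq] at h1
      exact ⟨h1, hx⟩
    · rintro ⟨h1, h2⟩ hx'
      simp [altChi, h1]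
  have hset2 : ((Finset.range (2*n)).filter
        (fun x => ∀ hx : x < 2*n, altChi n ⟨x, hx⟩ = false ∧ i < (⟨x, hx⟩ : Fin (2*n))))
      = ((Finset.range (2*n)).filter fun j => j % 2 = 1 ∧ 2*((i:ℕ)/2)+1 < j) := by
    apply Finset.filter_congr
    intro x hx
    simp only [Finset.mem_range] at hx
    constructor
    · intro hall
      obtain ⟨h1, h2⟩ := hall hx
      simp only [altChi, decide_eq_false_iff_not] at h1
      rw [Fin.lt_def] at h2
      simp only [Fin.val_mk] at h2
      exact ⟨by omega, by omega⟩
    · rintro ⟨h1, h2⟩ hx'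
      refine ⟨by simp [altChi]; omega, ?_⟩
      rw [Fin.lt_def]
      simp only [Fin.val_mk]
      omega
  rw [hset1, hset2, card_even_lt n n le_rfl, card_odd_gt n _ (by have := i.isLt; omega)]
  have := i.isLt
  omega

end Helpers

section Helpers2
open Finset
variable {A : Type*} [Ring A]

lemma prod_adj_zero : ∀ (i : ℕ) (L : List A), i + 1 < L.length →
    L.getD i 1 * L.getD (i+1) 1 = 0 → L.prod = 0
  | 0, [], h, _ => by simp at h
  | 0, [a], h, _ => by simp at h
  | 0, a :: b :: t, _, hz => by
      simp only [List.getD_cons_zero, List.getD_cons_succ] at hz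
      simp only [List.prod_cons, ← mul_assoc, hz, zero_mul]
  | (i+1), [], h, _ => by simp at h
  | (i+1), a :: t, h, hz => by
      have ht : t.prod = 0 := prod_adj_zero i t (by simpa using h) (by simpa using hz)
      simp [List.prod_cons, ht]

lemma range_map_getD : ∀ L : List A, (List.range L.length).map (fun j => L.getD j 1) = L
  | [] => by simp
  | a :: t => by
      rw [List.length_cons, List.range_succ_eq_map, List.map_cons, List.map_map]
      simp only [List.getD_cons_zero]
      congr 1
      have h : ((fun j => (a :: t).getD j 1) ∘ Nat.succ) = (fun j => t.getD j 1) := by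
        funext j
        simp [List.getD_cons_succ]
      rw [h]
      exact range_map_getD t

lemma pairing (q : ℕ) : ∀ (w : ℕ → A),
    ((List.range (2*q+1)).map w).prod
      = w 0 * (List.ofFn fun i : Fin q => w (2*(i:ℕ)+1) * w (2*(i:ℕ)+2)).prod := by
  induction q with
  | zero => intro w; simp [List.range_succ]
  | succ q ih =>
      intro w
      have h1 : 2*(q+1)+1 = ((2*q+1)+1)+1 := by ring
      rw [h1, List.range_succ_eq_map, List.range_succ_eq_map]
      simp only [List.map_cons, List.map_map, List.prod_cons]
      rw [show ((fun j => w j) ∘ Nat.succ ∘ Nat.succ) = (fun j => w (j+2)) from rfl]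
      rw [ih (fun j => w (j+2))]
      have h3 : (List.ofFn fun i : Fin (q+1) => w (2*(i:ℕ)+1) * w (2*(i:ℕ)+2))
          = (w 1 * w 2) :: (List.ofFn fun i : Fin q => w (2*(i:ℕ)+3) * w (2*(i:ℕ)+4)) := by
        rw [List.ofFn_succ]
        rfl
      rw [h3]
      simp only [List.prod_cons, ← mul_assoc]

lemma alt_parity {α : Type*} (L : List α) (d : α) (v : α → ℕ)
    (halt : ∀ i, i + 1 < L.length → v (L.getD i d) % 2 ≠ v (L.getD (i+1) d) % 2) :
    ∀ j, j < L.length → v (L.getD j d) % 2 = (v (L.getD 0 d) + j) % 2 := by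
  intro j
  induction j with
  | zero => intro _; omega
  | succ j ih =>
      intro hj
      have h1 := ih (by omega)
      have h2 := halt j (by omega)
      omega

lemma adjacent_in_sort {α : Type*} [LinearOrder α] (s : Finset α) {a b : α}
    (ha : a ∈ s) (hb : b ∈ s) (hab : a < b) (hbtw : ∀ c ∈ s, ¬(a < c ∧ c < b)) :
    ∃ i : ℕ, ∃ h : i + 1 < (s.sort (· ≤ ·)).length,
      (s.sort (· ≤ ·)).get ⟨i, by omega⟩ = a ∧ (s.sort (· ≤ ·)).get ⟨i+1, h⟩ = b := by
  set l := s.sort (· ≤ ·) with hl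
  have hsort : l.Pairwise (· < ·) := (Finset.sortedLT_sort s).pairwise
  have hal : a ∈ l := (Finset.mem_sort _).2 ha
  have hbl : b ∈ l := (Finset.mem_sort _).2 hb
  obtain ⟨ia, hia⟩ := List.get_of_mem hal
  obtain ⟨ib, hib⟩ := List.get_of_mem hbl
  have hialt : ia < ib := by
    by_contra hcon
    push_neg at hcon
    rcases eq_or_lt_of_le hcon with h | h
    · rw [h, hia] at hib
      exact absurd hib (ne_of_lt hab)
    · have h2 := hsort.rel_get_of_lt h
      rw [hia, hib] at h2
      exact absurd hab (not_lt.2 h2.le)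
  have hib1 : (ia : ℕ) + 1 < l.length := by
    have := ib.isLt
    have : (ia : ℕ) < (ib : ℕ) := hialt
    omega
  refine ⟨(ia : ℕ), hib1, hia, ?_⟩
  by_contra hne
  have hmem : l.get ⟨(ia:ℕ)+1, hib1⟩ ∈ s := (Finset.mem_sort _).1 (l.get_mem _)
  refine hbtw _ hmem ⟨?_, ?_⟩
  · rw [← hia]
    exact hsort.rel_get_of_lt (by rw [Fin.lt_def]; simp)
  · rcases lt_or_eq_of_le (show (ia:ℕ)+1 ≤ (ib:ℕ) from hialt) with h | h
    · rw [← hib]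
      exact hsort.rel_get_of_lt (by rw [Fin.lt_def]; simpa using h)
    · exfalso
      apply hne
      rw [← hib]
      congr 1
      exact Fin.ext h

end Helpers2

section Helpers3
open BiFreeNL Finset
variable {A : Type*} [Ring A] [Algebra ℂ A]

lemma phi_alt_zero (φ : A →ₗ[ℂ] ℂ) {K : Type*} {C' D' : K → Set A} {k : K}
    (hXY : ∀ (m : ℕ) (x : Fin (m + 1) → A) (y : Fin m → A),
      (∀ i, x i ∈ C' k) → (∀ i, y i ∈ D' k) →
      φ (x 0 * (List.ofFn fun i : Fin m => y i * x i.succ).prod) = 0)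
    (q : ℕ) (L : List A) (hlen : L.length = 2*q+1)
    (hx : ∀ j, j < L.length → j % 2 = 0 → L.getD j 1 ∈ C' k)
    (hy : ∀ j, j < L.length → j % 2 = 1 → L.getD j 1 ∈ D' k) :
    φ L.prod = 0 := by
  have h1 : L.prod = ((List.range (2*q+1)).map (fun j => L.getD j 1)).prod := by
    rw [← hlen, range_map_getD]
  rw [h1, pairing q (fun j => L.getD j 1)]
  exact hXY q (fun i => L.getD (2*(i:ℕ)) 1) (fun i => L.getD (2*(i:ℕ)+1) 1)
    (fun i => hx _ (by have := i.isLt; omega) (by omega))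
    (fun i => hy _ (by have := i.isLt; omega) (by omega))

lemma block_eq {n : ℕ} {π : Finset (Finset (Fin n))} (hpart : IsPartition π)
    {U V : Finset (Fin n)} (hU : U ∈ π) (hV : V ∈ π) {i : Fin n}
    (hiU : i ∈ U) (hiV : i ∈ V) : U = V := by
  obtain ⟨B, _, hBu⟩ := hpart.2 i
  rw [hBu U ⟨hU, hiU⟩, hBu V ⟨hV, hiV⟩]

lemma joined_of_good {n : ℕ} (hn : 1 ≤ n) {π : Finset (Finset (Fin (2*n)))}
    (hπ : IsBiNonCrossing (altChi n) π)
    (hends : ∀ V ∈ π, ∀ (hV : V.Nonempty), ((V.min' hV : Fin (2*n)) : ℕ) % 2 ≠ ((V.max' hV : Fin (2*n)) : ℕ) % 2)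
    (hcons : ∀ V ∈ π, ∀ a ∈ V, ∀ b ∈ V, a < b → (∀ c ∈ V, ¬(a < c ∧ c < b)) →
      ((a : Fin (2*n)) : ℕ) % 2 ≠ ((b : Fin (2*n)) : ℕ) % 2) :
    ∀ m : Fin n, SameBlock π (dIdx m) (dIdx' m) := by
  have hpart := hπ.1
  have main : ∀ t : ℕ, ∀ m : Fin n, n - (m : ℕ) ≤ t → SameBlock π (dIdx m) (dIdx' m) := by
    intro t
    induction t with
    | zero => intro m hm; exact absurd hm (by have := m.isLt; omega)
    | succ t ih =>
        intro m hm
        have hjoin : ∀ j : Fin n, (m : ℕ) < (j : ℕ) → SameBlock π (dIdx j) (dIdx' j) :=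
          fun j hj => ih j (by omega)
        by_contra hnot
        obtain ⟨W, ⟨hWπ, hmemW⟩, _⟩ := hpart.2 (dIdx' m)
        obtain ⟨V, ⟨hVπ, hmemV⟩, _⟩ := hpart.2 (dIdx m)
        have hmW : dIdx m ∉ W := fun h => hnot ⟨W, hWπ, h, hmemW⟩
        have hm'V : dIdx' m ∉ V := fun h => hnot ⟨V, hVπ, hmemV, h⟩
        have hWne : W.Nonempty := ⟨_, hmemW⟩
        have hVne : V.Nonempty := ⟨_, hmemV⟩
        have hmlt : (m : ℕ) < n := m.isLt
        have hdval : ((dIdx m : Fin (2*n)) : ℕ) = 2*(m:ℕ) := rfl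
        have hdval' : ((dIdx' m : Fin (2*n)) : ℕ) = 2*(m:ℕ)+1 := rfl
        -- Step W1 : min' W < dIdx' m
        have hminW : W.min' hWne < dIdx' m := by
          rcases lt_or_eq_of_le (W.min'_le _ hmemW) with h | h
          · exact h
          · exfalso
            have hminval : ((W.min' hWne : Fin (2*n)) : ℕ) = 2*(m:ℕ)+1 := by rw [h, hdval']
            have hmaxe := hends W hWπ hWne
            rw [hminval] at hmaxe
            have hmaxeven : ((W.max' hWne : Fin (2*n)) : ℕ) % 2 = 0 := by omega
            have hmaxge : 2*(m:ℕ)+1 ≤ ((W.max' hWne : Fin (2*n)) : ℕ) := by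
              rw [← hminval]
              exact W.min'_le _ (W.max'_mem hWne)
            have hmaxlt : ((W.max' hWne : Fin (2*n)) : ℕ) < 2*n := (W.max' hWne).isLt
            have hf2 : ((W.max' hWne : Fin (2*n)) : ℕ)/2 < n := by omega
            obtain ⟨U, hUπ, hfU, hf'U⟩ := hjoin ⟨_, hf2⟩
              (show (m:ℕ) < ((W.max' hWne : Fin (2*n)) : ℕ)/2 by omega)
            have hdf : dIdx (⟨_, hf2⟩ : Fin n) = W.max' hWne := by
              apply Fin.ext
              show 2*(((W.max' hWne : Fin (2*n)) : ℕ)/2) = _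
              omega
            rw [hdf] at hfU
            have hUW : U = W := block_eq hpart hUπ hWπ hfU (W.max'_mem hWne)
            rw [hUW] at hf'U
            have hle := W.le_max' _ hf'U
            rw [Fin.le_def] at hle
            have hval : ((dIdx' (⟨_, hf2⟩ : Fin n) : Fin (2*n)) : ℕ)
                = 2*(((W.max' hWne : Fin (2*n)) : ℕ)/2)+1 := rfl
            rw [hval] at hle
            omega
        -- Step W2 : predecessor of dIdx' m in W
        have hexp : ∃ p : Fin (2*n), p ∈ W ∧ p < dIdx' m ∧ ∀ c ∈ W, c < dIdx' m → c ≤ p := by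
          have hfilne : (W.filter (fun x => x < dIdx' m)).Nonempty :=
            ⟨_, Finset.mem_filter.2 ⟨W.min'_mem hWne, hminW⟩⟩
          have h1 := Finset.mem_filter.1 ((W.filter (fun x => x < dIdx' m)).max'_mem hfilne)
          refine ⟨(W.filter (fun x => x < dIdx' m)).max' hfilne, h1.1, h1.2, ?_⟩
          intro c hc hlt
          exact Finset.le_max' (W.filter (fun x => x < dIdx' m)) c (Finset.mem_filter.2 ⟨hc, hlt⟩)
        obtain ⟨pred, hpredW, hpredlt, hpredmax⟩ := hexp
        have hbtwW : ∀ c ∈ W, ¬(pred < c ∧ c < dIdx' m) := by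
          rintro c hc ⟨h1, h2⟩
          exact absurd h1 (not_lt.2 (hpredmax c hc h2))
        have hpredpar := hcons W hWπ pred hpredW (dIdx' m) hmemW hpredlt hbtwW
        rw [hdval'] at hpredpar
        have hpredeven : ((pred : Fin (2*n)) : ℕ) % 2 = 0 := by omega
        have hpredval : ((pred : Fin (2*n)) : ℕ) ≠ 2*(m:ℕ) := by
          intro h
          exact hmW ((Fin.ext (h.trans hdval.symm) : pred = dIdx m) ▸ hpredW)
        have hpredlt' : ((pred : Fin (2*n)) : ℕ) < 2*(m:ℕ)+1 := by
          rw [Fin.lt_def, hdval'] at hpredlt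
          exact hpredlt
        -- Step V1 : max' V = dIdx m
        have hmaxV : V.max' hVne = dIdx m := by
          by_contra hcon
          have hmaxgt : dIdx m < V.max' hVne :=
            lt_of_le_of_ne (V.le_max' _ hmemV) (fun h => hcon h.symm)
          have hexs : ∃ s : Fin (2*n), s ∈ V ∧ dIdx m < s ∧ ∀ c ∈ V, dIdx m < c → s ≤ c := by
            have hfilne : (V.filter (fun x => dIdx m < x)).Nonempty :=
              ⟨_, Finset.mem_filter.2 ⟨V.max'_mem hVne, hmaxgt⟩⟩
            have h1 := Finset.mem_filter.1 ((V.filter (fun x => dIdx m < x)).min'_mem hfilne)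
            refine ⟨(V.filter (fun x => dIdx m < x)).min' hfilne, h1.1, h1.2, ?_⟩
            intro c hc hlt
            exact Finset.min'_le (V.filter (fun x => dIdx m < x)) c (Finset.mem_filter.2 ⟨hc, hlt⟩)
          obtain ⟨succ, hsuccV, hsuccgt, hsuccmin⟩ := hexs
          have hbtwV : ∀ c ∈ V, ¬(dIdx m < c ∧ c < succ) := by
            rintro c hc ⟨h1, h2⟩
            exact absurd h2 (not_lt.2 (hsuccmin c hc h1))
          have hsuccpar := hcons V hVπ (dIdx m) hmemV succ hsuccV hsuccgt hbtwV
          rw [hdval] at hsuccpar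
          have hsuccodd : ((succ : Fin (2*n)) : ℕ) % 2 = 1 := by omega
          have hsuccgt' : 2*(m:ℕ) < ((succ : Fin (2*n)) : ℕ) := by
            rw [Fin.lt_def, hdval] at hsuccgt
            exact hsuccgt
          have hsuccne : ((succ : Fin (2*n)) : ℕ) ≠ 2*(m:ℕ)+1 := by
            intro h
            exact hm'V ((Fin.ext (h.trans hdval'.symm) : succ = dIdx' m) ▸ hsuccV)
          have hsucclt : ((succ : Fin (2*n)) : ℕ) < 2*n := succ.isLt
          have hc2 : ((succ : Fin (2*n)) : ℕ)/2 < n := by omega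
          obtain ⟨U, hUπ, hcU, hc'U⟩ := hjoin ⟨_, hc2⟩
            (show (m:ℕ) < ((succ : Fin (2*n)) : ℕ)/2 by omega)
          have hdc' : dIdx' (⟨_, hc2⟩ : Fin n) = succ := by
            apply Fin.ext
            show 2*(((succ : Fin (2*n)) : ℕ)/2)+1 = _
            omega
          rw [hdc'] at hc'U
          have hUV : U = V := block_eq hpart hUπ hVπ hc'U hsuccV
          rw [hUV] at hcU
          have hle := hsuccmin _ hcU (by
            rw [Fin.lt_def, hdval]
            show 2*(m:ℕ) < 2*(((succ : Fin (2*n)) : ℕ)/2)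
            omega)
          rw [Fin.le_def] at hle
          have hval : ((dIdx (⟨_, hc2⟩ : Fin n) : Fin (2*n)) : ℕ)
              = 2*(((succ : Fin (2*n)) : ℕ)/2) := rfl
          rw [hval] at hle
          omega
        -- min' V odd, < 2m
        have hminVpar := hends V hVπ hVne
        rw [hmaxV, hdval] at hminVpar
        have hminVodd : ((V.min' hVne : Fin (2*n)) : ℕ) % 2 = 1 := by omega
        have hminVle : V.min' hVne ≤ dIdx m := by
          rw [← hmaxV]
          exact V.min'_le _ (V.max'_mem hVne)
        have hminVlt : ((V.min' hVne : Fin (2*n)) : ℕ) < 2*(m:ℕ) := by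
          rw [Fin.le_def, hdval] at hminVle
          omega
        -- the crossing
        have hrank1 : chiRank (altChi n) pred = ((pred : Fin (2*n)) : ℕ)/2 :=
          chiRank_even _ hpredeven
        have hrank2 : chiRank (altChi n) (dIdx m) = (m : ℕ) := by
          rw [chiRank_even _ (by rw [hdval]; omega), hdval]
          omega
        have hrank3 : chiRank (altChi n) (dIdx' m) = 2*n - 1 - (m : ℕ) := by
          rw [chiRank_odd _ (by rw [hdval']; omega), hdval']
          congr 1
          omega
        have hrank4 : chiRank (altChi n) (V.min' hVne)
            = 2*n - 1 - ((V.min' hVne : Fin (2*n)) : ℕ)/2 :=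
          chiRank_odd _ hminVodd
        have hcross := hπ.2 pred (dIdx m) (dIdx' m) (V.min' hVne)
          (by rw [hrank1, hrank2]; omega)
          (by rw [hrank2, hrank3]; omega)
          (by rw [hrank3, hrank4]; omega)
          ⟨W, hWπ, hpredW, hmemW⟩
          ⟨V, hVπ, hmemV, V.min'_mem hVne⟩
        obtain ⟨U, hUπ, hpredU, hmU⟩ := hcross
        have hUW : U = W := block_eq hpart hUπ hWπ hpredU hpredW
        have hUV : U = V := block_eq hpart hUπ hVπ hmU hmemV
        exact hnot ⟨V, hVπ, hmemV, by rw [← hUV, hUW]; exact hmemW⟩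
  intro m
  exact main n m (by omega)

end Helpers3

open BiFreeNL in
/-- **Vanishing of non-Boolean moment terms in a bi-free Boolean system, scalar case.** -/
theorem moment_terms_vanish_off_boolean_partitions
    {A : Type*} [Ring A] [Algebra ℂ A] {K : Type*}
    (φ : A →ₗ[ℂ] ℂ) (hφ : φ 1 = 1)
    (μ : MoebiusFamily) (hμ : ∀ (n : ℕ) (χ : Fin n → Bool), IsMoebius χ (μ n χ))
    (C' D' : K → Set A) (hsys : BiFreeBooleanSystem φ μ C' D')
    (n : ℕ) (hn : 1 ≤ n)
    (ε : Fin (2 * n) → K) (hε : ∀ m : Fin n, ε (dIdx m) = ε (dIdx' m))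
    (T S : Fin n → A)
    (hT : ∀ m : Fin n, T m ∈ C' (ε (dIdx m)))
    (hS : ∀ m : Fin n, S m ∈ D' (ε (dIdx' m)))
    (π : Finset (Finset (Fin (2 * n)))) (hπ : π ∈ BNC (altChi n))
    (hπε : ∀ i j : Fin (2 * n), SameBlock π i j → ε i = ε j)
    (hπb : π ∉ BNCb n) :
    phiPart φ (interleave T S) π = 0 := by
  classical
  obtain ⟨C, D, _hbf, hC'C, hD'D, _hsmul, hCC, hDD, hXY, hYX⟩ := hsys
  have h2n : 0 < 2 * n := by omega
  set Z : Fin (2 * n) → A := interleave T S with hZdef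
  set d0 : Fin (2 * n) := ⟨0, h2n⟩ with hd0
  have hBNC : IsBiNonCrossing (altChi n) π := by
    have := hπ
    rw [BNC, Finset.mem_filter] at this
    exact this.2
  have hpart : IsPartition π := hBNC.1
  -- memberships of the interleaved entries
  have hZC : ∀ v : Fin (2 * n), (v : ℕ) % 2 = 0 → Z v ∈ C' (ε v) := by
    intro v hv
    have hlt : (v : ℕ) / 2 < n := by have := v.isLt; omega
    have hd : dIdx (⟨(v : ℕ) / 2, hlt⟩ : Fin n) = v := by
      apply Fin.ext
      show 2 * ((v : ℕ) / 2) = (v : ℕ)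
      omega
    have hmem := hT ⟨(v : ℕ) / 2, hlt⟩
    rw [hd] at hmem
    have hZv : Z v = T ⟨(v : ℕ) / 2, hlt⟩ := by
      simp only [hZdef, interleave, hv, if_true]
    rw [hZv]
    exact hmem
  have hZD : ∀ v : Fin (2 * n), (v : ℕ) % 2 = 1 → Z v ∈ D' (ε v) := by
    intro v hv
    have hlt : (v : ℕ) / 2 < n := by have := v.isLt; omega
    have hd : dIdx' (⟨(v : ℕ) / 2, hlt⟩ : Fin n) = v := by
      apply Fin.ext
      show 2 * ((v : ℕ) / 2) + 1 = (v : ℕ)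
      omega
    have hmem := hS ⟨(v : ℕ) / 2, hlt⟩
    rw [hd] at hmem
    have hZv : Z v = S ⟨(v : ℕ) / 2, hlt⟩ := by
      simp only [hZdef, interleave, hv]
      norm_num
    rw [hZv]
    exact hmem
  by_cases hgood : ∀ V ∈ π,
      (∀ i, i + 1 < (V.sort (· ≤ ·)).length →
        (((V.sort (· ≤ ·)).getD i d0 : Fin (2 * n)) : ℕ) % 2
          ≠ (((V.sort (· ≤ ·)).getD (i + 1) d0 : Fin (2 * n)) : ℕ) % 2) ∧
      ((((V.sort (· ≤ ·)).getD 0 d0 : Fin (2 * n)) : ℕ) % 2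
        ≠ (((V.sort (· ≤ ·)).getD ((V.sort (· ≤ ·)).length - 1) d0 : Fin (2 * n)) : ℕ) % 2)
  · -- all blocks good : contradiction with hπb
    exfalso
    apply hπb
    rw [BNCb, Finset.mem_filter]
    refine ⟨hπ, ?_⟩
    apply joined_of_good hn hBNC
    · -- ends
      intro V hV hVne
      have hlen0 : 0 < (V.sort (· ≤ ·)).length := by
        rw [Finset.length_sort]
        exact Finset.card_pos.2 hVne
      have hlast : (V.sort (· ≤ ·)).length - 1 < (V.sort (· ≤ ·)).length := by omega
      have h1 := (hgood V hV).2
      rw [List.getD_eq_getElem _ _ hlen0, List.getD_eq_getElem _ _ hlast,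
        Finset.sorted_zero_eq_min'] at h1
      have h2 := Finset.sorted_last_eq_max'_aux V hlast hVne
      rw [h2] at h1
      exact h1
    · -- consecutive
      intro V hV a ha b hb hab hbtw
      obtain ⟨i, hlt, hia, hib⟩ := adjacent_in_sort V ha hb hab hbtw
      have h1 := (hgood V hV).1 i hlt
      rw [List.getD_eq_getElem _ _ (by omega : i < (V.sort (· ≤ ·)).length),
        List.getD_eq_getElem _ _ hlt] at h1
      rw [← hia, ← hib]
      exact h1
  · -- some block is bad : the corresponding factor vanishes
    push_neg at hgood
    obtain ⟨V, hVπ, hbad⟩ := hgood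
    show (∏ W ∈ π, φ ((W.sort (· ≤ ·)).map Z).prod) = 0
    apply Finset.prod_eq_zero hVπ
    have hVne : V.Nonempty := hpart.1 V hVπ
    have hlen0 : 0 < (V.sort (· ≤ ·)).length := by
      rw [Finset.length_sort]
      exact Finset.card_pos.2 hVne
    have hmemV : ∀ j, j < (V.sort (· ≤ ·)).length → (V.sort (· ≤ ·)).getD j d0 ∈ V := by
      intro j hj
      rw [List.getD_eq_getElem _ _ hj]
      exact (Finset.mem_sort _).1 (List.get_mem _ _)
    have hεeq : ∀ j, j < (V.sort (· ≤ ·)).length →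
        ε ((V.sort (· ≤ ·)).getD j d0) = ε ((V.sort (· ≤ ·)).getD 0 d0) := by
      intro j hj
      exact hπε _ _ ⟨V, hVπ, hmemV j hj, hmemV 0 hlen0⟩
    have hLget : ∀ j, j < (V.sort (· ≤ ·)).length →
        ((V.sort (· ≤ ·)).map Z).getD j 1 = Z ((V.sort (· ≤ ·)).getD j d0) := by
      intro j hj
      rw [List.getD_eq_getElem ((V.sort (· ≤ ·)).map Z) _ (by simpa using hj), List.getD_eq_getElem _ _ hj, List.getElem_map]
    by_cases halt : ∀ i, i + 1 < (V.sort (· ≤ ·)).length →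
        (((V.sort (· ≤ ·)).getD i d0 : Fin (2 * n)) : ℕ) % 2
          ≠ (((V.sort (· ≤ ·)).getD (i + 1) d0 : Fin (2 * n)) : ℕ) % 2
    · -- alternating but endpoints of the same parity
      have hpareq : (((V.sort (· ≤ ·)).getD 0 d0 : Fin (2 * n)) : ℕ) % 2
          = (((V.sort (· ≤ ·)).getD ((V.sort (· ≤ ·)).length - 1) d0 : Fin (2 * n)) : ℕ) % 2 :=
        hbad halt
      have hparj : ∀ j, j < (V.sort (· ≤ ·)).length →
          (((V.sort (· ≤ ·)).getD j d0 : Fin (2 * n)) : ℕ) % 2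
            = ((((V.sort (· ≤ ·)).getD 0 d0 : Fin (2 * n)) : ℕ) + j) % 2 := by
        intro j hj
        exact alt_parity (V.sort (· ≤ ·)) d0 (fun x => (x : ℕ)) halt j hj
      have hlastpar := hparj ((V.sort (· ≤ ·)).length - 1) (by omega)
      have hodd : ((V.sort (· ≤ ·)).length - 1) % 2 = 0 := by omega
      have hlen : ((V.sort (· ≤ ·)).map Z).length
          = 2 * (((V.sort (· ≤ ·)).length - 1) / 2) + 1 := by
        rw [List.length_map]
        omega
      rcases Nat.mod_two_eq_zero_or_one (((V.sort (· ≤ ·)).getD 0 d0 : Fin (2 * n)) : ℕ) with hp0 | hp0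
      · -- starts with a left (C') element
        exact phi_alt_zero φ (hXY (ε ((V.sort (· ≤ ·)).getD 0 d0))) _ _ hlen
          (by
            intro j hjL hj2
            have hj : j < (V.sort (· ≤ ·)).length := by rwa [List.length_map] at hjL
            rw [hLget j hj]
            have hpar : (((V.sort (· ≤ ·)).getD j d0 : Fin (2 * n)) : ℕ) % 2 = 0 := by
              have := hparj j hj
              omega
            have hmem := hZC _ hpar
            rwa [hεeq j hj] at hmem)
          (by
            intro j hjL hj2
            have hj : j < (V.sort (· ≤ ·)).length := by rwa [List.length_map] at hjL
            rw [hLget j hj]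
            have hpar : (((V.sort (· ≤ ·)).getD j d0 : Fin (2 * n)) : ℕ) % 2 = 1 := by
              have := hparj j hj
              omega
            have hmem := hZD _ hpar
            rwa [hεeq j hj] at hmem)
      · -- starts with a right (D') element
        exact phi_alt_zero φ (hYX (ε ((V.sort (· ≤ ·)).getD 0 d0))) _ _ hlen
          (by
            intro j hjL hj2
            have hj : j < (V.sort (· ≤ ·)).length := by rwa [List.length_map] at hjL
            rw [hLget j hj]
            have hpar : (((V.sort (· ≤ ·)).getD j d0 : Fin (2 * n)) : ℕ) % 2 = 1 := by
              have := hparj j hj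
              omega
            have hmem := hZD _ hpar
            rwa [hεeq j hj] at hmem)
          (by
            intro j hjL hj2
            have hj : j < (V.sort (· ≤ ·)).length := by rwa [List.length_map] at hjL
            rw [hLget j hj]
            have hpar : (((V.sort (· ≤ ·)).getD j d0 : Fin (2 * n)) : ℕ) % 2 = 0 := by
              have := hparj j hj
              omega
            have hmem := hZC _ hpar
            rwa [hεeq j hj] at hmem)
    · -- two adjacent entries of the same parity : zero product inside the block
      push_neg at halt
      obtain ⟨i, hi1, hipar⟩ := halt
      have hiV : (V.sort (· ≤ ·)).getD i d0 ∈ V := hmemV i (by omega)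
      have hi1V : (V.sort (· ≤ ·)).getD (i+1) d0 ∈ V := hmemV (i+1) hi1
      have hεab : ε ((V.sort (· ≤ ·)).getD i d0) = ε ((V.sort (· ≤ ·)).getD (i+1) d0) :=
        hπε _ _ ⟨V, hVπ, hiV, hi1V⟩
      have hzero : Z ((V.sort (· ≤ ·)).getD i d0) * Z ((V.sort (· ≤ ·)).getD (i+1) d0) = 0 := by
        rcases Nat.mod_two_eq_zero_or_one (((V.sort (· ≤ ·)).getD i d0 : Fin (2 * n)) : ℕ)
          with hp | hp
        · have hp' : (((V.sort (· ≤ ·)).getD (i+1) d0 : Fin (2 * n)) : ℕ) % 2 = 0 := by omega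
          exact hCC _ _ (hZC _ hp) _ (hεab ▸ hZC _ hp')
        · have hp' : (((V.sort (· ≤ ·)).getD (i+1) d0 : Fin (2 * n)) : ℕ) % 2 = 1 := by omega
          exact hDD _ _ (hZD _ hp) _ (hεab ▸ hZD _ hp')
      have hprod : ((V.sort (· ≤ ·)).map Z).prod = 0 := by
        apply prod_adj_zero i
        · rw [List.length_map]
          exact hi1
        · rw [hLget i (by omega), hLget (i+1) hi1]
          exact hzero
      rw [hprod, map_zero]
end
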